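/- arXiv:2203.03394 — 5 statements merged into one kernel-verified Lean document; each statement's English description precedes it below -/
import Mathlib

section
/- For every positive integer m there exist nodes t_1, …, t_{m−1} ∈ (0,1), t_m = 1, and weights w_1, …, w_m > 0 with w_m = 1/m², such that: (i) ln x − r_m(x) ≥ 0 for all x > 0, where r_m(x) = Σ_{i=1}^m w_i f_{t_i}(x); and (ii) there exist constants C > 0 and δ > 0 such that |ln x − r_m(x)| ≤ C·|x − 1|^{2m} for all x > 0 with |x − 1| < δ. -/
/-- The function `f_t(x) = (x-1)/(t(x-1)+1)`. -/
noncomputable def ft (t x : ℝ) : ℝ := (x - 1) / (t * (x - 1) + 1)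

open Polynomial Set MeasureTheory intervalIntegral Finset

namespace GR

noncomputable def Pint (p : ℝ[X]) : ℝ := ∫ x in (0:ℝ)..1, p.eval x

lemma pint_intble (p : ℝ[X]) (a b : ℝ) :
    IntervalIntegrable (fun x => p.eval x) volume a b :=
  (p.continuous_aeval).intervalIntegrable a b

lemma Pint_add (p q : ℝ[X]) : Pint (p + q) = Pint p + Pint q := by
  unfold Pint
  simp only [eval_add]
  exact intervalIntegral.integral_add (pint_intble p 0 1) (pint_intble q 0 1)

lemma Pint_smul (c : ℝ) (p : ℝ[X]) : Pint (C c * p) = c * Pint p := by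
  unfold Pint
  simp only [eval_mul, eval_C]
  exact intervalIntegral.integral_const_mul c _

lemma Pint_deriv (p : ℝ[X]) : Pint (derivative p) = p.eval 1 - p.eval 0 := by
  unfold Pint
  rw [show (fun x => (derivative p).eval x) = deriv (fun x => p.eval x) by
    funext x; exact (Polynomial.deriv ..).symm]
  exact integral_deriv_eq_sub (fun x _ => p.differentiable_aeval x) (by
    rw [show deriv (fun x => p.eval x) = fun x => (derivative p).eval x by
      funext x; exact Polynomial.deriv ..]
    exact (pint_intble _ 0 1))

lemma Pint_pow (k : ℕ) : Pint (X ^ k) = 1 / (k + 1 : ℝ) := by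
  have h : (X:ℝ[X]) ^ k = derivative (C (1/(k+1):ℝ) * X ^ (k+1)) := by
    rw [derivative_C_mul, derivative_X_pow]
    simp only [Nat.add_sub_cancel, Nat.cast_add, Nat.cast_one, ← C_eq_natCast]
    rw [← mul_assoc, ← C_mul, one_div, inv_mul_cancel₀ (by positivity : (k:ℝ)+1 ≠ 0), C_1, one_mul]
  rw [h, Pint_deriv]
  simp


lemma Pint_sub (p q : ℝ[X]) : Pint (p - q) = Pint p - Pint q := by
  have := Pint_add (p - q) q; simp at this; linarith

noncomputable def G (n : ℕ) : ℝ[X] := X ^ n * (1 - X) ^ (n + 1)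

noncomputable def h (n : ℕ) : ℕ → ℝ[X]
  | 0 => 1
  | (j+1) => C ((n:ℝ) - j) * ((1 - X) * h n j) - C ((n:ℝ) + 1 - j) * (X * h n j)
      + X * (1 - X) * derivative (h n j)

lemma hrep (n : ℕ) : ∀ j, j ≤ n →
    derivative^[j] (G n) = X ^ (n - j) * (1 - X) ^ (n + 1 - j) * h n j := by
  intro j
  induction j with
  | zero => intro _; simp [G, h]
  | succ j ih =>
    intro hj
    have hj' : j ≤ n := Nat.le_of_succ_le hj
    obtain ⟨a, ha⟩ : ∃ a, n - j = a + 1 := ⟨n - j - 1, by omega⟩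
    have h1 : n + 1 - j = a + 2 := by omega
    have h2 : n - (j+1) = a := by omega
    have h3 : n + 1 - (j+1) = a + 1 := by omega
    have hc1 : ((n:ℝ) - j) = ((a:ℝ) + 1) := by
      have : n = j + (a+1) := by omega
      subst this; push_cast; ring
    have hc2 : ((n:ℝ) + 1 - j) = ((a:ℝ) + 2) := by
      have : n = j + (a+1) := by omega
      subst this; push_cast; ring
    rw [Function.iterate_succ_apply', ih hj', ha, h1, h2, h3]
    show derivative (X ^ (a+1) * (1 - X) ^ (a+2) * h n j) = _
    rw [h]
    rw [hc1, hc2]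
    simp only [derivative_mul, derivative_pow, derivative_X, derivative_sub,
      derivative_one, map_add, map_one, map_ofNat, C_eq_natCast]
    push_cast
    ring

lemma h_natDegree (n : ℕ) : ∀ j, (h n j).natDegree ≤ j := by
  intro j
  induction j with
  | zero => simp [h]
  | succ j ih =>
    rw [h]
    refine le_trans (natDegree_add_le _ _) ?_
    refine max_le (le_trans (natDegree_sub_le _ _) ?_) ?_
    · refine max_le ?_ ?_
      · refine le_trans (natDegree_mul_le) ?_
        simp only [natDegree_C, zero_add]
        refine le_trans (natDegree_mul_le) ?_
        have : (1 - X : ℝ[X]).natDegree ≤ 1 := by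
          refine le_trans (natDegree_sub_le _ _) (by simp)
        omega
      · refine le_trans (natDegree_mul_le) ?_
        simp only [natDegree_C, zero_add]
        refine le_trans (natDegree_mul_le) ?_
        simp only [natDegree_X]
        omega
    · by_cases hd : derivative (h n j) = 0
      · rw [hd, mul_zero]; simp
      · refine le_trans (natDegree_mul_le) ?_
        have h1 : (X * (1 - X) : ℝ[X]).natDegree ≤ 2 := by
          refine le_trans (natDegree_mul_le) ?_
          have : (1 - X : ℝ[X]).natDegree ≤ 1 := le_trans (natDegree_sub_le _ _) (by simp)
          simp only [natDegree_X]; omega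
        have h2 := natDegree_derivative_le (h n j)
        have h3 : 1 ≤ (h n j).natDegree := by
          by_contra hcon
          push_neg at hcon
          interval_cases hn : (h n j).natDegree
          · obtain ⟨c, hc⟩ := natDegree_eq_zero.mp hn
            rw [← hc] at hd
            simp at hd
        omega

lemma h_eval_one_rec (n j : ℕ) :
    (h n (j+1)).eval 1 = -((n:ℝ) + 1 - j) * (h n j).eval 1 := by
  rw [h]; simp; ring

lemma h_eval_one (n : ℕ) : ∀ j, j ≤ n →
    (h n j).eval 1 * ((n + 1 - j).factorial : ℝ) = (-1)^j * ((n+1).factorial : ℝ) := by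
  intro j
  induction j with
  | zero => intro _; simp [h]
  | succ j ih =>
    intro hj
    have hj' : j ≤ n := Nat.le_of_succ_le hj
    obtain ⟨b, hb⟩ : ∃ b, n = j + (b + 1) := ⟨n - j - 1, by omega⟩
    have h2 : n + 1 - (j+1) = b + 1 := by omega
    have h1 : n + 1 - j = b + 2 := by omega
    have hcoef : ((n:ℝ) + 1 - j) = ((b:ℝ) + 2) := by rw [hb]; push_cast; ring
    rw [h_eval_one_rec, h2, hcoef]
    have := ih hj'
    rw [h1] at this
    have hfac : ((b + 2).factorial : ℝ) = ((b:ℝ) + 2) * ((b + 1).factorial : ℝ) := by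
      rw [show b + 2 = (b+1) + 1 from rfl, Nat.factorial_succ]; push_cast; ring
    rw [hfac] at this
    calc -((b:ℝ) + 2) * (h n j).eval 1 * ((b+1).factorial : ℝ)
        = -((h n j).eval 1 * (((b:ℝ) + 2) * ((b + 1).factorial : ℝ))) := by ring
      _ = -((-1)^j * ((n+1).factorial : ℝ)) := by rw [this]
      _ = (-1)^(j+1) * ((n+1).factorial : ℝ) := by ring

lemma h_eval_one_n (n : ℕ) : (h n n).eval 1 = (-1)^n * ((n+1).factorial : ℝ) := by
  have := h_eval_one n n le_rfl
  simpa using this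


lemma Pint_zero : Pint 0 = 0 := by unfold Pint; simp

lemma Krec (n j a : ℕ) (hc1 : ((n:ℝ) - j) = (a:ℝ)+1) :
    (X:ℝ[X])^a * h n (j+1) =
      derivative (X^(a+1) * ((1-X) * h n j)) - C ((a:ℝ)+1) * (X^(a+1) * h n j) := by
  have hc2 : ((n:ℝ) + 1 - j) = (a:ℝ)+2 := by linarith
  rw [h, hc1, hc2]
  simp only [derivative_mul, derivative_pow, derivative_X, derivative_sub, derivative_one,
    map_add, map_one, map_ofNat, C_eq_natCast]
  push_cast
  ring

lemma Kval (n : ℕ) : ∀ j, j ≤ n →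
    Pint (X^(n-j) * h n j) * (((n-j).factorial : ℝ) * ((n:ℝ)+1)) = (-1)^j * (n.factorial : ℝ) := by
  intro j
  induction j with
  | zero =>
    intro _
    show Pint (X^n * h n 0) * _ = _
    have : (X:ℝ[X])^n * h n 0 = X^n := by simp [h]
    rw [this, Pint_pow]
    simp only [pow_zero, one_mul, Nat.sub_zero]
    field_simp
  | succ j ih =>
    intro hj
    have hj' : j ≤ n := Nat.le_of_succ_le hj
    obtain ⟨a, ha⟩ : ∃ a, n = j + (a + 1) := ⟨n - j - 1, by omega⟩
    have h1 : n - j = a + 1 := by omega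
    have h2 : n - (j+1) = a := by omega
    have hc1 : ((n:ℝ) - j) = (a:ℝ)+1 := by rw [ha]; push_cast; ring
    rw [h2, Krec n j a hc1, Pint_sub, Pint_deriv, Pint_smul]
    have he1 : ((X:ℝ[X])^(a+1) * ((1-X) * h n j)).eval 1 = 0 := by simp
    have he0 : ((X:ℝ[X])^(a+1) * ((1-X) * h n j)).eval 0 = 0 := by simp
    rw [he1, he0]
    have := ih hj'
    rw [h1] at this
    have hfac : ((a + 1).factorial : ℝ) = ((a:ℝ) + 1) * ((a).factorial : ℝ) := by
      rw [Nat.factorial_succ]; push_cast; ring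
    rw [hfac] at this
    calc (0 - 0 - ((a:ℝ)+1) * Pint (X^(a+1) * h n j)) * (((a).factorial : ℝ) * ((n:ℝ)+1))
        = -(Pint (X^(a+1) * h n j) * ((((a:ℝ)+1) * ((a).factorial:ℝ)) * ((n:ℝ)+1))) := by ring
      _ = -((-1)^j * (n.factorial : ℝ)) := by rw [← this]
      _ = (-1)^(j+1) * (n.factorial : ℝ) := by ring

lemma Pint_h_n (n : ℕ) : Pint (h n n) * ((n:ℝ)+1) = (-1)^n * (n.factorial : ℝ) := by
  have := Kval n n le_rfl
  simpa using this

lemma ibp (n : ℕ) : ∀ k, k ≤ n → ∀ s : ℝ[X],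
    Pint (derivative^[k] (G n) * s) = (-1)^k * Pint (G n * derivative^[k] s) := by
  intro k
  induction k with
  | zero => intro _ s; simp
  | succ k ih =>
    intro hk s
    have hk' : k ≤ n := Nat.le_of_succ_le hk
    have key : derivative^[k+1] (G n) * s
        = derivative (derivative^[k] (G n) * s) - derivative^[k] (G n) * derivative s := by
      rw [Function.iterate_succ_apply', derivative_mul]; ring
    rw [key, Pint_sub, Pint_deriv]
    have hrepk := hrep n k hk'
    have he1 : (derivative^[k] (G n) * s).eval 1 = 0 := by
      rw [hrepk]
      have : n + 1 - k ≠ 0 := by omega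
      simp [zero_pow this]
    have he0 : (derivative^[k] (G n) * s).eval 0 = 0 := by
      rw [hrepk]
      have : n - k ≠ 0 := by omega
      simp [zero_pow this]
    rw [he1, he0]
    rw [ih hk' (derivative s)]
    rw [← Function.iterate_succ_apply]
    ring

lemma orth (n : ℕ) (s : ℝ[X]) (hs : s.natDegree < n) :
    Pint (derivative^[n] (G n) * s) = 0 := by
  rw [ibp n n le_rfl s, Polynomial.iterate_derivative_eq_zero hs, mul_zero, Pint_zero, mul_zero]


lemma rolle_chain (n : ℕ) : ∀ j, j ≤ n → ∃ b : ℕ → ℝ,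
    (∀ i, i + 1 < j → b i < b (i+1)) ∧ (∀ i, i < j → b i ∈ Ioo (0:ℝ) 1) ∧
    (∀ i, i < j → (derivative^[j] (G n)).eval (b i) = 0) := by
  intro j
  induction j with
  | zero => intro _; exact ⟨fun _ => 0, by omega, by omega, by omega⟩
  | succ j ih =>
    intro hj
    have hj' : j ≤ n := Nat.le_of_succ_le hj
    obtain ⟨b, hmono, hmem, hzero⟩ := ih hj'
    set e : ℕ → ℝ := fun i => if i = 0 then 0 else if i ≤ j then b (i-1) else 1 with he
    have he0 : ∀ i, 0 ≤ e i := by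
      intro i
      simp only [he]
      split_ifs with h1 h2
      · exact le_refl 0
      · exact (hmem _ (by omega)).1.le
      · exact zero_le_one
    have he1 : ∀ i, e i ≤ 1 := by
      intro i
      simp only [he]
      split_ifs with h1 h2
      · exact zero_le_one
      · exact (hmem _ (by omega)).2.le
      · exact le_refl 1
    have hestep : ∀ i, i ≤ j → e i < e (i+1) := by
      intro i hi
      simp only [he]
      rcases Nat.eq_zero_or_pos i with h0 | hpos
      · subst h0
        simp only [if_pos rfl]
        by_cases h1 : 1 ≤ j
        · simp only [if_neg one_ne_zero, if_pos h1]
          exact (hmem 0 (by omega)).1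
        · simp only [if_neg one_ne_zero, if_neg h1]
          exact zero_lt_one
      · have hne : i ≠ 0 := by omega
        have hne' : i + 1 ≠ 0 := by omega
        simp only [if_neg hne, if_neg hne', if_pos hi]
        by_cases h1 : i + 1 ≤ j
        · simp only [if_pos h1]
          have := hmono (i-1) (by omega)
          have hrw : i - 1 + 1 = i := by omega
          rwa [hrw] at this
        · simp only [if_neg h1]
          exact (hmem (i-1) (by omega)).2
    have hez : ∀ i, i ≤ j + 1 → (derivative^[j] (G n)).eval (e i) = 0 := by
      intro i hi
      simp only [he]
      rcases Nat.eq_zero_or_pos i with h0 | hpos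
      · subst h0
        simp only [if_pos rfl]
        rw [hrep n j hj']
        have : n - j ≠ 0 := by omega
        simp [zero_pow this]
      · have hne : i ≠ 0 := by omega
        by_cases h1 : i ≤ j
        · simp only [if_neg hne, if_pos h1]
          exact hzero (i-1) (by omega)
        · simp only [if_neg hne, if_neg h1]
          rw [hrep n j hj']
          have : n + 1 - j ≠ 0 := by omega
          simp [zero_pow this]
    have rolle : ∀ i : ℕ, ∃ y : ℝ, i ≤ j →
        y ∈ Ioo (e i) (e (i+1)) ∧ (derivative^[j+1] (G n)).eval y = 0 := by
      intro i
      by_cases hi : i ≤ j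
      · obtain ⟨y, hy, hdy⟩ := exists_deriv_eq_zero (f := fun x => (derivative^[j] (G n)).eval x)
          (hestep i hi) (Polynomial.continuousOn _)
          (by show eval (e i) _ = eval (e (i+1)) _
              rw [hez i (by omega), hez (i+1) (by omega)])
        refine ⟨y, fun _ => ⟨hy, ?_⟩⟩
        rw [Function.iterate_succ_apply', ← Polynomial.deriv]
        exact hdy
      · exact ⟨0, fun hcon => absurd hcon hi⟩
    choose c hc using rolle
    refine ⟨c, ?_, ?_, ?_⟩
    · intro i hi
      have h1 := (hc i (by omega)).1
      have h2 := (hc (i+1) (by omega)).1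
      exact lt_trans h1.2 h2.1
    · intro i hi
      have h1 := (hc i (by omega)).1
      exact ⟨lt_of_le_of_lt (he0 i) h1.1, lt_of_lt_of_le h1.2 (he1 (i+1))⟩
    · intro i hi
      exact (hc i (by omega)).2

lemma pi_exists (n : ℕ) : ∃ (t : Fin n → ℝ) (a₀ : ℝ), StrictMono t ∧
    (∀ i, t i ∈ Ioo (0:ℝ) 1) ∧ a₀ ≠ 0 ∧ h n n = C a₀ * ∏ i, (X - C (t i)) := by
  obtain ⟨b, hmono, hmem, hzero⟩ := rolle_chain n n le_rfl
  have hmono' : ∀ i i' : ℕ, i' < n → i < i' → b i < b i' := by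
    intro i i' hn'
    induction i' with
    | zero => omega
    | succ k ihk =>
      intro hik
      rcases Nat.lt_or_ge i k with hik' | hik''
      · exact lt_trans (ihk (by omega) hik') (hmono k (by omega))
      · have : i = k := by omega
        subst this
        exact hmono i (by omega)
  set t : Fin n → ℝ := fun i => b i with ht
  have htmono : StrictMono t := by
    intro i i' hii'
    exact hmono' i i' i'.isLt hii'
  have htinj : Function.Injective t := htmono.injective
  have hroot : ∀ i : Fin n, (h n n).eval (t i) = 0 := by
    intro i
    have hz := hzero i i.isLt
    rw [hrep n n le_rfl] at hz
    have hn1 : n - n = 0 := by omega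
    have hn2 : n + 1 - n = 1 := by omega
    rw [hn1, hn2] at hz
    simp only [pow_zero, one_mul, pow_one, eval_mul, eval_sub, eval_one, eval_X] at hz
    rcases mul_eq_zero.mp hz with h1 | h2
    · exfalso
      have := (hmem i i.isLt).2
      linarith [sub_eq_zero.mp h1]
    · exact h2
  have hne : h n n ≠ 0 := by
    intro hcon
    have heq := h_eval_one_n n
    rw [hcon] at heq
    simp only [eval_zero] at heq
    have h2 : ((-1:ℝ))^n * (((n+1).factorial:ℕ):ℝ) ≠ 0 := by
      apply mul_ne_zero (pow_ne_zero _ (by norm_num))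
      positivity
    exact h2 heq.symm
  have hdvd : (∏ i, (X - C (t i))) ∣ h n n := by
    refine Finset.prod_dvd_of_coprime ?_ ?_
    · intro i _ j _ hij
      exact pairwise_coprime_X_sub_C htinj hij
    · intro i _
      exact dvd_iff_isRoot.mpr (hroot i)
  obtain ⟨q, hq⟩ := hdvd
  have hπmonic : (∏ i, (X - C (t i)) : ℝ[X]).Monic := monic_prod_of_monic _ _ fun i _ => monic_X_sub_C _
  have hπdeg : (∏ i, (X - C (t i)) : ℝ[X]).natDegree = n := by
    rw [natDegree_prod _ _ fun i _ => X_sub_C_ne_zero _]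
    simp
  have hqne : q ≠ 0 := by
    intro hcon; rw [hcon, mul_zero] at hq; exact hne hq
  have hqdeg : q.natDegree = 0 := by
    have hd : (h n n).natDegree = n + q.natDegree := by
      rw [hq, natDegree_mul (hπmonic.ne_zero) hqne, hπdeg]
    have := h_natDegree n n
    omega
  obtain ⟨a₀, ha₀⟩ := natDegree_eq_zero.mp hqdeg
  refine ⟨t, a₀, htmono, fun i => hmem i i.isLt, ?_, ?_⟩
  · intro hcon
    rw [hcon] at ha₀
    rw [← ha₀] at hqne
    simp at hqne
  · rw [hq, ← ha₀, mul_comm]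


lemma Pint_sum {ι : Type*} (s : Finset ι) (f : ι → ℝ[X]) :
    Pint (∑ i ∈ s, f i) = ∑ i ∈ s, Pint (f i) := by
  classical
  induction s using Finset.induction_on with
  | empty => simpa using Pint_zero
  | insert _ _ hx ih =>
    rw [Finset.sum_insert hx, Finset.sum_insert hx, Pint_add, ih]

set_option maxHeartbeats 2000000 in
lemma main (n : ℕ) : ∃ (T W : Fin (n+1) → ℝ),
    (∀ i : Fin n, T i.castSucc ∈ Ioo (0:ℝ) 1) ∧
    T (Fin.last n) = 1 ∧
    (∀ i, 0 < W i) ∧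
    W (Fin.last n) = 1/((n:ℝ)+1)^2 ∧
    (∀ x : ℝ, 0 < x → 0 ≤ Real.log x - ∑ i, W i * ft (T i) x) ∧
    (∀ x : ℝ, 0 < x → |x - 1| < 1/2 →
      |Real.log x - ∑ i, W i * ft (T i) x| ≤ 4^(n+1) * |x-1|^(2*(n+1))) := by
  obtain ⟨t, a₀, htmono, htmem, ha₀, hhn⟩ := pi_exists n
  set π : ℝ[X] := ∏ i, (X - C (t i)) with hπdef
  set T : Fin (n+1) → ℝ := Fin.snoc t 1 with hTdef
  have hTcs : ∀ i : Fin n, T i.castSucc = t i := fun i => Fin.snoc_castSucc _ _ _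
  have hTlast : T (Fin.last n) = 1 := Fin.snoc_last _ _
  have hTinj : Function.Injective T := by
    intro i j hij
    induction i using Fin.lastCases with
    | last =>
      induction j using Fin.lastCases with
      | last => rfl
      | cast j =>
        rw [hTlast, hTcs] at hij
        exact absurd hij.symm (ne_of_lt (htmem j).2)
    | cast i =>
      induction j using Fin.lastCases with
      | last =>
        rw [hTlast, hTcs] at hij
        exact absurd hij (ne_of_lt (htmem i).2)
      | cast j =>
        rw [hTcs, hTcs] at hij
        exact congrArg _ (htmono.injective hij)
  have hTinjOn : Set.InjOn T ↑(univ : Finset (Fin (n+1))) := fun a _ b _ hab => hTinj hab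
  set ω : ℝ[X] := ∏ i, (X - C (T i)) with hωdef
  have hω : ω = π * (X - C 1) := by
    rw [hωdef, Fin.prod_univ_castSucc]
    congr 1
    · exact Finset.prod_congr rfl fun i _ => by rw [hTcs]
    · rw [hTlast]
  have hπmonic : π.Monic := monic_prod_of_monic _ _ fun i _ => monic_X_sub_C _
  have hπdeg : π.natDegree = n := by
    rw [hπdef, natDegree_prod _ _ fun i _ => X_sub_C_ne_zero _]
    simp
  have hωmonic : ω.Monic := monic_prod_of_monic _ _ fun i _ => monic_X_sub_C _
  have hωdeg : ω.natDegree = n + 1 := by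
    rw [hωdef, natDegree_prod _ _ fun i _ => X_sub_C_ne_zero _]
    simp
  have hDnG : derivative^[n] (G n) = -(C a₀) * ((X - C 1) * π) := by
    rw [hrep n n le_rfl]
    have hn1 : n - n = 0 := by omega
    have hn2 : n + 1 - n = 1 := by omega
    rw [hn1, hn2, hhn]
    simp only [pow_zero, pow_one, one_mul]
    ring_nf
    simp only [C_1]
    ring
  have orthπ : ∀ s : ℝ[X], s.natDegree < n → Pint ((X - C 1) * π * s) = 0 := by
    intro s hs
    have h0 := orth n s hs
    rw [hDnG] at h0
    have : -(C a₀) * ((X - C 1) * π) * s = C (-a₀) * ((X - C 1) * π * s) := by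
      rw [map_neg]; ring
    rw [this, Pint_smul] at h0
    rcases mul_eq_zero.mp h0 with h1 | h2
    · exact absurd (neg_eq_zero.mp h1) ha₀
    · exact h2
  set W : Fin (n+1) → ℝ := fun i => Pint (Lagrange.basis univ T i) with hWdef
  -- Lagrange integration for degree ≤ n
  have lagrange_int : ∀ ρ : ℝ[X], ρ.degree < (n+1 : ℕ) →
      Pint ρ = ∑ i, W i * ρ.eval (T i) := by
    intro ρ hρ
    have hcard : ρ.degree < (univ : Finset (Fin (n+1))).card := by
      rwa [Finset.card_univ, Fintype.card_fin]
    have hinterp := Lagrange.eq_interpolate hTinjOn hcard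
    calc Pint ρ = Pint (Lagrange.interpolate univ T fun i => ρ.eval (T i)) := by rw [← hinterp]
      _ = Pint (∑ i, C (ρ.eval (T i)) * Lagrange.basis univ T i) := by
          rw [Lagrange.interpolate_apply]
      _ = ∑ i, Pint (C (ρ.eval (T i)) * Lagrange.basis univ T i) := Pint_sum _ _
      _ = ∑ i, W i * ρ.eval (T i) := by
          refine Finset.sum_congr rfl fun i _ => ?_
          rw [Pint_smul]; ring
  have hωeval : ∀ i, ω.eval (T i) = 0 := by
    intro i
    rw [hωdef, eval_prod]
    exact Finset.prod_eq_zero (mem_univ i) (by simp)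
  -- Exactness for degree ≤ 2n
  have exact2n : ∀ p : ℝ[X], p.natDegree ≤ 2*n → Pint p = ∑ i, W i * p.eval (T i) := by
    intro p hp
    set ρ := p %ₘ ω with hρdef
    set q := p /ₘ ω with hqdef
    have hsplit : ρ + ω * q = p := modByMonic_add_div p ω
    have hρdeg : ρ.degree < ω.degree := degree_modByMonic_lt p hωmonic
    have hωdeg' : ω.degree = (n+1 : ℕ) := by
      rw [degree_eq_natDegree hωmonic.ne_zero, hωdeg]
    have hρdeg' : ρ.degree < (n+1 : ℕ) := by rwa [hωdeg'] at hρdeg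
    have hρnat : ρ.natDegree ≤ n := by
      rcases eq_or_ne ρ 0 with h0 | h0
      · simp [h0]
      · have := (natDegree_lt_iff_degree_lt h0).mpr hρdeg'
        omega
    have hωq : Pint (ω * q) = 0 := by
      rcases eq_or_ne q 0 with h0 | h0
      · rw [h0, mul_zero, Pint_zero]
      · have hd1 : (ω * q).natDegree = (n+1) + q.natDegree := by
          rw [natDegree_mul hωmonic.ne_zero h0, hωdeg]
        have hd2 : (ω * q).natDegree ≤ 2*n := by
          have : ω * q = p - ρ := by rw [← hsplit]; ring
          rw [this]
          refine le_trans (natDegree_sub_le _ _) ?_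
          exact max_le hp (le_trans hρnat (by omega))
        have hqdeg : q.natDegree < n := by omega
        have : ω * q = (X - C 1) * π * q := by rw [hω]; ring
        rw [this]
        exact orthπ q hqdeg
    have hevalρ : ∀ i, p.eval (T i) = ρ.eval (T i) := by
      intro i
      rw [← hsplit]
      simp [hωeval i]
    rw [← hsplit, Pint_add, hωq, add_zero, lagrange_int ρ hρdeg']
    refine Finset.sum_congr rfl fun i _ => ?_
    rw [hsplit, hevalρ i]
  -- basis at the last node
  have hπ1pos : 0 < π.eval 1 := by
    rw [hπdef, eval_prod]
    refine Finset.prod_pos fun i _ => ?_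
    simp only [eval_sub, eval_X, eval_C]
    linarith [(htmem i).2]
  have herase : (univ : Finset (Fin (n+1))).erase (Fin.last n) = Finset.image Fin.castSucc univ := by
    ext j
    simp only [Finset.mem_erase, Finset.mem_univ, and_true, Finset.mem_image, true_and]
    constructor
    · intro hj
      obtain ⟨k, hk⟩ := Fin.exists_castSucc_eq.mpr hj
      exact ⟨k, hk⟩
    · rintro ⟨k, rfl⟩
      exact (Fin.castSucc_lt_last k).ne
  have hbasis : Lagrange.basis univ T (Fin.last n) = C ((π.eval 1)⁻¹) * π := by
    rw [Lagrange.basis, herase, Finset.prod_image (fun a _ b _ hab => Fin.castSucc_injective _ hab)]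
    have : ∀ k : Fin n, Lagrange.basisDivisor (T (Fin.last n)) (T k.castSucc)
        = C ((1 - t k)⁻¹) * (X - C (t k)) := by
      intro k
      rw [Lagrange.basisDivisor, hTlast, hTcs]
    rw [Finset.prod_congr rfl fun k _ => this k, Finset.prod_mul_distrib, ← map_prod]
    congr 1
    rw [hπdef, eval_prod, ← Finset.prod_inv_distrib]
    exact congrArg C (Finset.prod_congr rfl fun k _ => by rw [eval_sub, eval_X, eval_C])
  have hPintπ : a₀ * Pint π = Pint (h n n) := by rw [hhn, Pint_smul]
  have hfa : (((n+1).factorial : ℕ) : ℝ) = ((n:ℝ)+1) * ((n.factorial : ℕ) : ℝ) := by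
    rw [Nat.factorial_succ]; push_cast; ring
  have hsuff : Pint π * ((n:ℝ)+1)^2 = π.eval 1 := by
    apply mul_left_cancel₀ ha₀
    calc a₀ * (Pint π * ((n:ℝ)+1)^2)
        = (a₀ * Pint π) * ((n:ℝ)+1) * ((n:ℝ)+1) := by ring
      _ = (Pint (h n n) * ((n:ℝ)+1)) * ((n:ℝ)+1) := by rw [hPintπ]
      _ = ((-1)^n * ((n.factorial : ℕ) : ℝ)) * ((n:ℝ)+1) := by rw [Pint_h_n]
      _ = (-1)^n * (((n+1).factorial : ℕ) : ℝ) := by rw [hfa]; ring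
      _ = (h n n).eval 1 := (h_eval_one_n n).symm
      _ = a₀ * π.eval 1 := by rw [hhn]; simp
  have hπ1ne : π.eval 1 ≠ 0 := ne_of_gt hπ1pos
  have hWlast : W (Fin.last n) = 1/((n:ℝ)+1)^2 := by
    show Pint (Lagrange.basis univ T (Fin.last n)) = _
    rw [hbasis, Pint_smul]
    rw [inv_mul_eq_div, div_eq_div_iff hπ1ne (by positivity)]
    linarith [hsuff]
  have hWpos : ∀ i, 0 < W i := by
    intro i
    induction i using Fin.lastCases with
    | last => rw [hWlast]; positivity
    | cast i =>
      set p_i : ℝ[X] := (1 - X) * ∏ j ∈ univ.erase i, (X - C (t j))^2 with hpidef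
      have hpideg : p_i.natDegree ≤ 2*n := by
        have h1 : (1 - X : ℝ[X]).natDegree ≤ 1 := le_trans (natDegree_sub_le _ _) (by simp)
        have h2 : (∏ j ∈ univ.erase i, ((X : ℝ[X]) - C (t j))^2).natDegree ≤ 2*(n-1) := by
          refine le_trans (natDegree_prod_le _ _) ?_
          have hb : ∀ j ∈ univ.erase i, (((X:ℝ[X]) - C (t j))^2).natDegree ≤ 2 := by
            intro j _
            rw [natDegree_pow, natDegree_X_sub_C]
          refine le_trans (Finset.sum_le_sum hb) ?_
          rw [Finset.sum_const, Finset.card_erase_of_mem (mem_univ i), Finset.card_univ,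
            Fintype.card_fin, smul_eq_mul]
          omega
        have hn1 : 0 < n := i.pos
        refine le_trans natDegree_mul_le ?_
        omega
      have hxval := exact2n p_i hpideg
      have hzero : ∀ k : Fin (n+1), k ≠ i.castSucc → p_i.eval (T k) = 0 := by
        intro k hk
        induction k using Fin.lastCases with
        | last => rw [hTlast, hpidef]; simp
        | cast k =>
          have hki : k ≠ i := fun hcon => hk (by rw [hcon])
          rw [hTcs, hpidef]
          simp only [eval_mul, eval_prod, eval_pow, eval_sub, eval_X, eval_C, eval_one]
          apply mul_eq_zero_of_right
          exact Finset.prod_eq_zero (Finset.mem_erase.mpr ⟨hki, mem_univ k⟩) (by simp)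
      have hA : 0 < p_i.eval (t i) := by
        rw [hpidef]
        simp only [eval_mul, eval_prod, eval_pow, eval_sub, eval_X, eval_C, eval_one]
        apply mul_pos
        · linarith [(htmem i).2]
        · refine Finset.prod_pos fun j hj => ?_
          have hne : t i - t j ≠ 0 := by
            refine sub_ne_zero.mpr fun hcon => ?_
            exact (Finset.mem_erase.mp hj).1 (htmono.injective hcon).symm
          exact lt_of_le_of_ne (sq_nonneg _) (pow_ne_zero 2 hne).symm
      have hsum : Pint p_i = W i.castSucc * p_i.eval (t i) := by
        rw [hxval, Finset.sum_eq_single i.castSucc]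
        · rw [hTcs]
        · intro k _ hk
          rw [hzero k hk, mul_zero]
        · intro hcon
          exact absurd (Finset.mem_univ _) hcon
      have hPpos : 0 < Pint p_i := by
        refine intervalIntegral.integral_pos zero_lt_one (Polynomial.continuousOn _) ?_ ?_
        · intro x hx
          rw [hpidef]
          simp only [eval_mul, eval_prod, eval_pow, eval_sub, eval_X, eval_C, eval_one]
          apply mul_nonneg
          · linarith [hx.2]
          · exact Finset.prod_nonneg fun j _ => sq_nonneg _
        · exact ⟨t i, ⟨(htmem i).1.le, (htmem i).2.le⟩, hA⟩
      have hWeq : W i.castSucc = Pint p_i / p_i.eval (t i) := by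
        rw [eq_div_iff (ne_of_gt hA)]
        exact hsum.symm
      rw [hWeq]
      exact div_pos hPpos hA
  -- analytic part
  set Wp : ℝ[X] := (X - C 1) * π^2 with hWpdef
  have hWpeval : ∀ s : ℝ, Wp.eval s = (s - 1) * (π.eval s)^2 := by
    intro s; rw [hWpdef]; simp
  have htT01 : ∀ i, T i ∈ Icc (0:ℝ) 1 := by
    intro i
    induction i using Fin.lastCases with
    | last => rw [hTlast]; exact ⟨zero_le_one, le_refl 1⟩
    | cast i => rw [hTcs]; exact ⟨(htmem i).1.le, (htmem i).2.le⟩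
  have hπT : ∀ i : Fin n, π.eval (t i) = 0 := by
    intro i
    rw [hπdef, eval_prod]
    exact Finset.prod_eq_zero (Finset.mem_univ i) (by simp)
  have hWpnodes : ∀ i, Wp.eval (T i) = 0 := by
    intro i
    induction i using Fin.lastCases with
    | last => rw [hTlast, hWpeval]; simp
    | cast i => rw [hTcs, hWpeval, hπT i]; ring
  have key : ∀ x : ℝ, 0 < x → x ≠ 1 →
      (0 ≤ Real.log x - ∑ i, W i * ft (T i) x) ∧
      (|x - 1| < 1/2 →
        |Real.log x - ∑ i, W i * ft (T i) x| ≤ 4^(n+1) * |x-1|^(2*(n+1))) := by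
    intro x hx hx1
    set y := x - 1 with hydef
    have hy : y ≠ 0 := sub_ne_zero.mpr hx1
    have hy1 : (-1:ℝ) < y := by rw [hydef]; linarith
    set a := -y⁻¹ with hadef
    have hden : ∀ s ∈ Icc (0:ℝ) 1, 0 < s * y + 1 := by
      intro s hs
      rcases le_or_gt 0 y with hyy | hyy
      · nlinarith [hs.1, hs.2]
      · nlinarith [hs.1, hs.2]
    have hcase : a < 0 ∨ 1 < a := by
      rcases lt_or_gt_of_ne hy with hyy | hyy
      · right
        have hny : 0 < -y := by linarith
        have hny1 : -y < 1 := by linarith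
        rw [hadef, show -y⁻¹ = (-y)⁻¹ by rw [inv_neg]]
        rw [show (-y)⁻¹ = 1/(-y) by rw [one_div], lt_div_iff₀ hny]
        linarith
      · left
        rw [hadef]
        have : 0 < y⁻¹ := inv_pos.mpr hyy
        linarith
    have hsub : ∀ s ∈ Icc (0:ℝ) 1, s - a = (s*y+1)/y := by
      intro s hs
      rw [hadef]
      field_simp
      ring
    have hsane : ∀ s ∈ Icc (0:ℝ) 1, s - a ≠ 0 := by
      intro s hs
      rw [hsub s hs]
      exact div_ne_zero (ne_of_gt (hden s hs)) hy
    have hinv : ∀ s ∈ Icc (0:ℝ) 1, (s - a)⁻¹ = y/(s*y+1) := by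
      intro s hs
      rw [hsub s hs, inv_div]
    have hcontf : IntervalIntegrable (fun s => y/(s*y+1)) volume 0 1 := by
      apply ContinuousOn.intervalIntegrable
      rw [Set.uIcc_of_le zero_le_one]
      exact continuousOn_const.div
        ((continuous_id.mul continuous_const).add continuous_const).continuousOn
        (fun s hs => ne_of_gt (hden s hs))
    have hlog : Real.log x = ∫ s in (0:ℝ)..1, y / (s*y+1) := by
      have hF : ∀ s ∈ uIcc (0:ℝ) 1, HasDerivAt (fun u => Real.log (u*y+1)) (y/(s*y+1)) s := by
        intro s hs
        rw [Set.uIcc_of_le zero_le_one] at hs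
        have h1 : HasDerivAt (fun u : ℝ => u*y+1) y s := by
          simpa using ((hasDerivAt_id s).mul_const y).add_const 1
        have h2 := (Real.hasDerivAt_log (ne_of_gt (hden s hs))).comp s h1
        exact h2.congr_deriv (by ring)
      have := intervalIntegral.integral_eq_sub_of_hasDerivAt hF hcontf
      rw [this]
      have e1 : (1:ℝ)*y+1 = x := by rw [hydef]; ring
      have e0 : (0:ℝ)*y+1 = 1 := by ring
      rw [e1, e0, Real.log_one, sub_zero]
    have hft : ∀ i, ft (T i) x = (T i - a)⁻¹ := by
      intro i
      rw [hinv (T i) (htT01 i)]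
      show (x - 1) / (T i * (x-1) + 1) = y / (T i * y + 1)
      rw [← hydef]
    have hπa : π.eval a ≠ 0 := by
      rw [hπdef, eval_prod]
      refine Finset.prod_ne_zero_iff.mpr fun i _ => ?_
      simp only [eval_sub, eval_X, eval_C]
      rcases hcase with hc | hc
      · exact sub_ne_zero.mpr (by linarith [(htmem i).1])
      · exact sub_ne_zero.mpr (by linarith [(htmem i).2])
    have ha1 : a - 1 ≠ 0 := by
      rcases hcase with hc | hc
      · intro hcon; linarith
      · intro hcon; linarith
    have hWpa : Wp.eval a ≠ 0 := by
      rw [hWpeval]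
      exact mul_ne_zero ha1 (pow_ne_zero 2 hπa)
    obtain ⟨p0, hp0⟩ : (X - C a) ∣ (C (Wp.eval a) - Wp) :=
      dvd_iff_isRoot.mpr (by simp [IsRoot])
    have hWpdeg : Wp.natDegree ≤ 2*n+1 := by
      rw [hWpdef]
      refine le_trans natDegree_mul_le ?_
      have hh1 : ((X:ℝ[X]) - C 1).natDegree = 1 := natDegree_X_sub_C 1
      have hh2 : (π^2).natDegree = 2*n := by rw [natDegree_pow, hπdeg]
      omega
    have hp0deg : p0.natDegree ≤ 2*n := by
      rcases eq_or_ne p0 0 with h0 | h0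
      · simp [h0]
      · have hL : ((X - C a) * p0).natDegree = 1 + p0.natDegree := by
          rw [natDegree_mul (X_sub_C_ne_zero a) h0, natDegree_X_sub_C]
        have hR : ((X - C a) * p0).natDegree ≤ 2*n+1 := by
          rw [← hp0]
          refine le_trans (natDegree_sub_le _ _) ?_
          refine max_le (by simp [natDegree_C]) hWpdeg
        omega
    have hp0eval : ∀ s : ℝ, Wp.eval a - Wp.eval s = (s - a) * p0.eval s := by
      intro s
      have := congrArg (eval s) hp0
      simpa using this
    have hpfulldeg : (C (Wp.eval a)⁻¹ * p0).natDegree ≤ 2*n :=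
      le_trans natDegree_mul_le (by simp [natDegree_C, hp0deg])
    have hsum2 : ∑ i, W i * ft (T i) x = Pint (C (Wp.eval a)⁻¹ * p0) := by
      rw [exact2n _ hpfulldeg]
      refine Finset.sum_congr rfl fun i _ => ?_
      congr 1
      rw [hft i]
      have h1 := hp0eval (T i)
      rw [hWpnodes i, sub_zero] at h1
      simp only [eval_mul, eval_C]
      have h2 := hsane (T i) (htT01 i)
      field_simp
      linear_combination h1
    have herr : Real.log x - ∑ i, W i * ft (T i) x
        = ∫ s in (0:ℝ)..1, Wp.eval s / (Wp.eval a * (s - a)) := by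
      rw [hlog, hsum2]
      show _ - Pint _ = _
      unfold Pint
      rw [← intervalIntegral.integral_sub hcontf (pint_intble _ 0 1)]
      refine intervalIntegral.integral_congr ?_
      intro s hs
      rw [Set.uIcc_of_le zero_le_one] at hs
      have h1 := hden s hs
      have h2 := hsane s hs
      have h3 := hinv s hs
      have h4 := hp0eval s
      simp only [eval_mul, eval_C]
      rw [← h3]
      rw [eq_div_iff (mul_ne_zero hWpa h2)]
      have e1 : (s - a)⁻¹ * (s - a) = 1 := inv_mul_cancel₀ h2
      have e2 : (eval a Wp)⁻¹ * eval a Wp = 1 := inv_mul_cancel₀ hWpa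
      linear_combination (eval a Wp) * e1 - (s - a) * eval s p0 * e2 + h4
    have hpos : 0 ≤ Real.log x - ∑ i, W i * ft (T i) x := by
      rw [herr]
      apply intervalIntegral.integral_nonneg zero_le_one
      intro s hs
      have hnum : Wp.eval s ≤ 0 := by
        rw [hWpeval]
        nlinarith [sq_nonneg (π.eval s), hs.2]
      have hsq : 0 < (π.eval a)^2 := by positivity
      rcases hcase with hc | hc
      · have h5 : a - 1 < 0 := by linarith
        have h6 : 0 < s - a := by linarith [hs.1]
        have hdneg : Wp.eval a * (s - a) ≤ 0 := by
          rw [hWpeval]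
          exact mul_nonpos_iff.mpr (Or.inr ⟨(mul_neg_of_neg_of_pos h5 hsq).le, h6.le⟩)
        exact div_nonneg_iff.mpr (Or.inr ⟨hnum, hdneg⟩)
      · have h5 : 0 < a - 1 := by linarith
        have h6 : s - a ≤ 0 := by linarith [hs.2]
        have hdneg : Wp.eval a * (s - a) ≤ 0 := by
          rw [hWpeval]
          exact mul_nonpos_iff.mpr (Or.inl ⟨(mul_pos h5 hsq).le, h6⟩)
        exact div_nonneg_iff.mpr (Or.inr ⟨hnum, hdneg⟩)
    refine ⟨hpos, ?_⟩
    intro hsmall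
    rw [herr]
    have hy0 : 0 < |y| := abs_pos.mpr hy
    set κ := (2*|y|)⁻¹ with hκdef
    have hκpos : 0 < κ := by positivity
    have hay : |a| = |y|⁻¹ := by rw [hadef, abs_neg, abs_inv]
    have hgap : ∀ s ∈ Icc (0:ℝ) 1, κ ≤ |s - a| := by
      intro s hs
      have h1 : |a| - |s| ≤ |s - a| := by
        rw [abs_sub_comm]
        linarith [abs_sub_abs_le_abs_sub a s]
      have h2 : |s| ≤ 1 := abs_le.mpr ⟨by linarith [hs.1], hs.2⟩
      have h6 : 2 < |y|⁻¹ := by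
        rw [show |y|⁻¹ = 1/|y| by rw [one_div], lt_div_iff₀ hy0]
        linarith
      have h7 : κ = 2⁻¹ * |y|⁻¹ := by rw [hκdef, mul_inv]
      have h8 : κ ≤ |y|⁻¹ - 1 := by rw [h7]; linarith
      linarith [hay]
    have hπle : ∀ s ∈ Icc (0:ℝ) 1, |π.eval s| ≤ 1 := by
      intro s hs
      rw [hπdef, eval_prod, Finset.abs_prod]
      refine Finset.prod_le_one (fun i _ => abs_nonneg _) (fun i _ => ?_)
      simp only [eval_sub, eval_X, eval_C]
      rw [abs_le]
      exact ⟨by linarith [(htmem i).2, hs.1], by linarith [(htmem i).1, hs.2]⟩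
    have hWple : ∀ s ∈ Icc (0:ℝ) 1, |Wp.eval s| ≤ 1 := by
      intro s hs
      rw [hWpeval, abs_mul, abs_pow]
      have h1 : |s - 1| ≤ 1 := abs_le.mpr ⟨by linarith [hs.1], by linarith [hs.2]⟩
      have h2 := hπle s hs
      nlinarith [abs_nonneg (π.eval s), abs_nonneg (s-1)]
    have hπa_ge : κ^n ≤ |π.eval a| := by
      rw [hπdef, eval_prod, Finset.abs_prod]
      calc κ^n = ∏ _i : Fin n, κ := by
            rw [Finset.prod_const, Finset.card_univ, Fintype.card_fin]
        _ ≤ ∏ i, |eval a (X - C (t i))| := by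
            refine Finset.prod_le_prod (fun _ _ => hκpos.le) (fun i _ => ?_)
            simp only [eval_sub, eval_X, eval_C]
            rw [show a - t i = -(t i - a) by ring, abs_neg]
            exact hgap (t i) ⟨(htmem i).1.le, (htmem i).2.le⟩
    have hWpa_ge : κ^(2*n+1) ≤ |Wp.eval a| := by
      rw [hWpeval, abs_mul, abs_pow]
      have h1 : κ ≤ |a - 1| := by
        rw [show a - 1 = -((1:ℝ) - a) by ring, abs_neg]
        exact hgap 1 ⟨zero_le_one, le_refl 1⟩
      calc κ^(2*n+1) = κ * (κ^n)^2 := by ring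
        _ ≤ |a - 1| * |π.eval a|^2 := by
            refine mul_le_mul h1 ?_ (by positivity) (abs_nonneg _)
            exact pow_le_pow_left₀ (by positivity) hπa_ge 2
    have hCbound : ∀ s ∈ Set.uIoc (0:ℝ) 1,
        ‖Wp.eval s / (Wp.eval a * (s - a))‖ ≤ (2*|y|)^(2*(n+1)) := by
      intro s hs
      rw [Set.uIoc_of_le zero_le_one] at hs
      have hs' : s ∈ Icc (0:ℝ) 1 := ⟨hs.1.le, hs.2⟩
      rw [Real.norm_eq_abs, abs_div, abs_mul]
      have hd1 : κ^(2*n+2) ≤ |Wp.eval a| * |s - a| := by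
        calc κ^(2*n+2) = κ^(2*n+1) * κ := by ring
          _ ≤ |Wp.eval a| * |s - a| :=
              mul_le_mul hWpa_ge (hgap s hs') hκpos.le (abs_nonneg _)
      have hd0 : (0:ℝ) < κ^(2*n+2) := by positivity
      calc |Wp.eval s| / (|Wp.eval a| * |s - a|) ≤ 1 / κ^(2*n+2) :=
            div_le_div₀ zero_le_one (hWple s hs') hd0 hd1
        _ = (2*|y|)^(2*n+2) := by rw [hκdef, inv_pow, one_div, inv_inv]
        _ = (2*|y|)^(2*(n+1)) := by rw [show 2*(n+1) = 2*n+2 by ring]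
    have hnorm := intervalIntegral.norm_integral_le_of_norm_le_const hCbound
    rw [Real.norm_eq_abs] at hnorm
    refine le_trans hnorm ?_
    rw [show |(1:ℝ) - 0| = 1 by norm_num, mul_one, mul_pow]
    rw [show (2:ℝ)^(2*(n+1)) = 4^(n+1) by rw [show (4:ℝ) = 2^2 by norm_num, ← pow_mul]]
  refine ⟨T, W, ?_, hTlast, hWpos, hWlast, ?_, ?_⟩
  · intro i
    rw [hTcs]
    exact htmem i
  · intro x hx
    rcases eq_or_ne x 1 with rfl | hx1
    · have hz : ∀ i, ft (T i) 1 = 0 := by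
        intro i
        show ((1:ℝ)-1)/_ = 0
        norm_num
      simp [hz, Real.log_one]
    · exact (key x hx hx1).1
  · intro x hx hsx
    rcases eq_or_ne x 1 with rfl | hx1
    · have hz : ∀ i, ft (T i) 1 = 0 := by
        intro i
        show ((1:ℝ)-1)/_ = 0
        norm_num
      simp [hz, Real.log_one]
    · exact (key x hx hx1).2 hsx


end GR

/-- Existence of the Gauss–Radau quadrature data for the logarithm with one node fixed at the
endpoint `t_m = 1`: for every positive integer `m` there exist nodes
`t_1, …, t_{m-1} ∈ (0,1)`, `t_m = 1` and weights `w_1, …, w_m > 0` with `w_m = 1/m²` such that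
(i) `ln x - r_m(x) ≥ 0` for all `x > 0`, and (ii) `|ln x - r_m(x)| ≤ C|x-1|^{2m}` near `x = 1`
for some constants `C, δ > 0`, where `r_m(x) = ∑_i w_i f_{t_i}(x)`.
(The nodes are indexed by `Fin m`; the last node/weight is the one with index `m - 1`.) -/
theorem gauss_radau_quadrature_exists (m : ℕ) (hm : 1 ≤ m) :
    ∃ t w : Fin m → ℝ,
      (∀ i : Fin m, (i : ℕ) < m - 1 → t i ∈ Set.Ioo (0 : ℝ) 1) ∧
      (∀ i : Fin m, (i : ℕ) = m - 1 → t i = 1) ∧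
      (∀ i, 0 < w i) ∧
      (∀ i : Fin m, (i : ℕ) = m - 1 → w i = 1 / (m : ℝ) ^ 2) ∧
      (∀ x : ℝ, 0 < x → 0 ≤ Real.log x - ∑ i, w i * ft (t i) x) ∧
      (∃ C δ : ℝ, 0 < C ∧ 0 < δ ∧
        ∀ x : ℝ, 0 < x → |x - 1| < δ →
          |Real.log x - ∑ i, w i * ft (t i) x| ≤ C * |x - 1| ^ (2 * m)) := by
  obtain ⟨n, rfl⟩ : ∃ n, m = n + 1 := ⟨m - 1, by omega⟩
  obtain ⟨T, W, hT1, hT2, hW1, hW2, hmain, hbnd⟩ := GR.main n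
  refine ⟨T, W, ?_, ?_, hW1, ?_, hmain, ?_⟩
  · intro i hi
    have hi' : (i : ℕ) < n := by omega
    have : i = Fin.castSucc ⟨(i : ℕ), hi'⟩ := by
      ext
      simp
    rw [this]
    exact hT1 _
  · intro i hi
    have hi' : (i : ℕ) = n := by omega
    have : i = Fin.last n := by
      ext
      simpa using hi'
    rw [this]
    exact hT2
  · intro i hi
    have hi' : (i : ℕ) = n := by omega
    have : i = Fin.last n := by
      ext
      simpa using hi'
    rw [this, hW2]
    push_cast
    ring
  · refine ⟨4^(n+1), 1/2, by positivity, by norm_num, ?_⟩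
    intro x hx hδ
    exact hbnd x hx hδ
end

section
/- Let m ≥ 1 be an integer, let t_1, …, t_{m−1} ∈ (0,1), t_m = 1, and let w_1, …, w_m > 0 with w_m = 1/m². Set r_m(x) = Σ_{i=1}^m w_i f_{t_i}(x) for x > 0, and suppose that the function x ↦ (ln x − r_m(x))/(x−1)^{2m} is bounded on some punctured neighborhood of x = 1 intersected with (0,∞). Then for all x > 0 one has r_m(x) + r_m(1/x) ≥ −(1/m²)·(x + 1/x − 2). -/
open Polynomial Filter

noncomputable def Dp (t : ℝ) : ℝ[X] := (C t * (X - C 1) + 1) * (C (1 - t) * (X - C 1) + 1)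
noncomputable def Fp (t : ℝ) : ℝ[X] := C (t * (1 - t)) * (X - C 1) ^ 2

lemma Dp_eval (t x : ℝ) : (Dp t).eval x = (t * (x - 1) + 1) * ((1 - t) * (x - 1) + 1) := by
  simp [Dp]

lemma Fp_eval (t x : ℝ) : (Fp t).eval x = t * (1 - t) * (x - 1) ^ 2 := by
  simp [Fp]

lemma Dp_eq (t : ℝ) : Dp t = Fp t + X := by
  apply Polynomial.funext
  intro x
  simp [Dp_eval, Fp_eval]
  ring

lemma ndXC : ((X : ℝ[X]) - C 1).natDegree = 1 := natDegree_X_sub_C 1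

lemma Dp_natDegree (t : ℝ) : (Dp t).natDegree ≤ 2 := by
  have h1 : (C t * (X - C 1) + 1 : ℝ[X]).natDegree ≤ 1 := by
    apply le_trans (natDegree_add_le _ _)
    simp only [natDegree_one, max_le_iff]
    constructor
    · exact le_trans (natDegree_mul_le) (by rw [natDegree_C, ndXC])
    · omega
  have h2 : (C (1 - t) * (X - C 1) + 1 : ℝ[X]).natDegree ≤ 1 := by
    apply le_trans (natDegree_add_le _ _)
    simp only [natDegree_one, max_le_iff]
    constructor
    · exact le_trans (natDegree_mul_le) (by rw [natDegree_C, ndXC])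
    · omega
  exact le_trans natDegree_mul_le (by omega)

lemma Fp_natDegree (t : ℝ) : (Fp t).natDegree ≤ 2 := by
  apply le_trans natDegree_mul_le
  rw [natDegree_C, natDegree_pow, ndXC]

lemma Dp_eval_pos (t x : ℝ) (ht0 : 0 < t) (ht1 : t < 1) (hx : 0 < x) :
    0 < (Dp t).eval x := by
  rw [Dp_eval]
  have h1 : 0 < t * (x - 1) + 1 := by nlinarith [mul_pos ht0 hx]
  have h2 : 0 < (1 - t) * (x - 1) + 1 := by nlinarith [mul_pos (by linarith : (0:ℝ) < 1 - t) hx]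
  positivity

lemma ft_pair (t x : ℝ) (ht0 : 0 < t) (ht1 : t ≤ 1) (hx : 0 < x) :
    (ft t x + ft t (1 / x)) * ((t * (x - 1) + 1) * ((1 - t) * (x - 1) + 1)) =
      (1 - 2 * t) * (x - 1) ^ 2 := by
  have ha : t * (x - 1) + 1 ≠ 0 := by nlinarith [mul_pos ht0 hx]
  have hb : t * (1 / x - 1) + 1 ≠ 0 := by
    have h1 : 0 < t / x := div_pos ht0 hx
    have h2 : t * (1 / x - 1) + 1 = t / x + (1 - t) := by ring
    rw [h2]
    have : 0 < t / x + (1 - t) := by linarith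
    exact ne_of_gt this
  have hbb : (1 - t) * (x - 1) + 1 ≠ 0 := by
    nlinarith [mul_nonneg (by linarith : (0:ℝ) ≤ 1 - t) hx.le]
  have h2 : ft t (1 / x) = (1 - x) / ((1 - t) * (x - 1) + 1) := by
    unfold ft
    rw [div_eq_div_iff hb hbb]
    field_simp
    try ring
    try tauto
  rw [h2]
  unfold ft
  rw [div_add_div _ _ ha hbb, div_mul_eq_mul_div, div_eq_iff (mul_ne_zero ha hbb)]
  ring

lemma dvd_of_small (n : ℕ) : ∀ (P : ℝ[X]) (Cb δ : ℝ), 0 < δ →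
    (∀ x : ℝ, x ≠ 1 → |x - 1| < δ → |P.eval x| ≤ Cb * |x - 1| ^ n) →
    (X - C 1) ^ n ∣ P := by
  induction n with
  | zero => intro P Cb δ hδ h; simp only [pow_zero]; exact one_dvd P
  | succ n ih =>
    intro P Cb δ hδ h
    have hev : ∀ᶠ x in nhdsWithin (1:ℝ) {(1:ℝ)}ᶜ, ‖P.eval x‖ ≤ Cb * |x - 1| ^ (n+1) := by
      filter_upwards [self_mem_nhdsWithin,
        eventually_nhdsWithin_of_eventually_nhds (eventually_abs_sub_lt 1 hδ)] with x hx1 hx2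
      simpa [Real.norm_eq_abs] using h x hx1 hx2
    have t2 : Tendsto (fun x => P.eval x) (nhdsWithin (1:ℝ) {(1:ℝ)}ᶜ) (nhds 0) := by
      apply squeeze_zero_norm' hev
      have hc : Continuous fun x : ℝ => Cb * |x - 1| ^ (n+1) := by continuity
      have := hc.tendsto 1
      simp only [sub_self, abs_zero, zero_pow (Nat.succ_ne_zero n), mul_zero] at this
      exact this.mono_left nhdsWithin_le_nhds
    have t1 : Tendsto (fun x => P.eval x) (nhdsWithin (1:ℝ) {(1:ℝ)}ᶜ) (nhds (P.eval 1)) :=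
      (P.continuous.tendsto 1).mono_left nhdsWithin_le_nhds
    have hroot : P.eval 1 = 0 := tendsto_nhds_unique t1 t2
    obtain ⟨Q, hQ⟩ := dvd_iff_isRoot.mpr hroot
    have hQb : ∀ x : ℝ, x ≠ 1 → |x - 1| < δ → |Q.eval x| ≤ Cb * |x - 1| ^ n := by
      intro x hx1 hx2
      have hx0 : 0 < |x - 1| := abs_pos.mpr (sub_ne_zero.mpr hx1)
      have := h x hx1 hx2
      rw [hQ] at this
      simp only [eval_mul, eval_sub, eval_X, eval_C, abs_mul] at this
      rw [pow_succ'] at this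
      calc |Q.eval x| = |x - 1| * |Q.eval x| / |x - 1| := by field_simp
        _ ≤ Cb * (|x - 1| * |x - 1| ^ n) / |x - 1| := by gcongr
        _ = Cb * |x - 1| ^ n := by field_simp
    have := ih Q Cb δ hδ hQb
    rw [hQ, pow_succ']
    exact mul_dvd_mul_left _ this

set_option maxHeartbeats 1600000 in
/-- If `t_1, …, t_{m-1} ∈ (0,1)`, `t_m = 1`, `w_1, …, w_m > 0` with `w_m = 1/m²`, and
`(ln x - r_m(x))/(x-1)^{2m}` is bounded on a punctured neighborhood of `x = 1` (intersected
with `(0,∞)`), then `r_m(x) + r_m(1/x) ≥ -(1/m²)(x + 1/x - 2)` for all `x > 0`,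
where `r_m(x) = ∑_i w_i f_{t_i}(x)`. Nodes are indexed by `Fin m`, with the last node/weight
the one of index `m - 1`. -/
theorem rm_self_plus_rm_inv_lower_bound (m : ℕ) (hm : 1 ≤ m) (t w : Fin m → ℝ)
    (ht : ∀ i : Fin m, (i : ℕ) < m - 1 → t i ∈ Set.Ioo (0 : ℝ) 1)
    (htm : ∀ i : Fin m, (i : ℕ) = m - 1 → t i = 1)
    (hw : ∀ i, 0 < w i)
    (hwm : ∀ i : Fin m, (i : ℕ) = m - 1 → w i = 1 / (m : ℝ) ^ 2)
    (hbound : ∃ M δ : ℝ, 0 < δ ∧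
      ∀ x : ℝ, 0 < x → x ≠ 1 → |x - 1| < δ →
        |(Real.log x - ∑ i, w i * ft (t i) x) / (x - 1) ^ (2 * m)| ≤ M) :
    ∀ x : ℝ, 0 < x →
      (∑ i, w i * ft (t i) x) + (∑ i, w i * ft (t i) (1 / x)) ≥
        -(1 / (m : ℝ) ^ 2) * (x + 1 / x - 2) := by
  intro x hx
  have hmR : (0:ℝ) < (m:ℝ) := by exact_mod_cast hm
  have hm2 : (0:ℝ) < (m:ℝ)^2 := by positivity
  have hm1lt : m - 1 < m := by omega
  set i₀ : Fin m := ⟨m - 1, hm1lt⟩ with hi₀def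
  have ht0 : t i₀ = 1 := htm i₀ rfl
  have hw0 : w i₀ = 1 / (m:ℝ)^2 := hwm i₀ rfl
  set s : Finset (Fin m) := Finset.univ.erase i₀ with hsdef
  have hts : ∀ i ∈ s, 0 < t i ∧ t i < 1 := by
    intro i hi
    have h1 : i ≠ i₀ := (Finset.mem_erase.mp hi).1
    have h2 : (i : ℕ) < m - 1 := by
      have h3 : (i:ℕ) ≠ m - 1 := by
        intro h
        exact h1 (Fin.ext (by simp [h, hi₀def]))
      have := i.isLt
      omega
    exact ⟨(ht i h2).1, (ht i h2).2⟩
  -- split the full sum at i₀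
  have hsplit : ∀ y : ℝ, (∑ i, w i * ft (t i) y) =
      w i₀ * ft (t i₀) y + ∑ i ∈ s, w i * ft (t i) y := by
    intro y
    rw [hsdef]
    exact (Finset.add_sum_erase _ _ (Finset.mem_univ i₀)).symm
  -- value of the i₀ pair
  have hpair0 : ∀ y : ℝ, 0 < y →
      w i₀ * ft (t i₀) y + w i₀ * ft (t i₀) (1/y) = -(1/(m:ℝ)^2) * (y + 1/y - 2) := by
    intro y hy
    rw [ht0, hw0]
    have hy' : y ≠ 0 := ne_of_gt hy
    have e1 : ft 1 y = (y - 1)/y := by unfold ft; congr 1; ring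
    have e2 : ft 1 (1/y) = (1/y - 1)/(1/y) := by unfold ft; congr 1; ring
    rw [e1, e2]
    field_simp
    ring
  -- key: the interior sum is nonnegative
  have key : 0 ≤ ∑ i ∈ s, (w i * ft (t i) x + w i * ft (t i) (1/x)) := by
    rcases Finset.eq_empty_or_nonempty s with hse | hsne
    · simp [hse]
    have hn1 : 1 ≤ s.card := Finset.card_pos.mpr hsne
    have hcard : s.card = m - 1 := by
      rw [hsdef, Finset.card_erase_of_mem (Finset.mem_univ i₀), Finset.card_univ, Fintype.card_fin]
    have hm2' : 2 ≤ m := by omega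
    -- the polynomials
    set S : ℝ[X] := ∑ i ∈ s, C (w i * (1 - 2 * t i)) * ∏ j ∈ s.erase i, Dp (t j) with hSdef
    set Q : ℝ[X] := ∏ i ∈ s, Dp (t i) with hQdef
    set Pp : ℝ[X] := C ((m:ℝ)^2) * X * S - Q + ∏ i ∈ s, Fp (t i) with hPpdef
    have hQeval : ∀ y : ℝ, Q.eval y = ∏ i ∈ s, (Dp (t i)).eval y := by
      intro y; rw [hQdef, eval_prod]
    have hQpos : ∀ y : ℝ, 0 < y → 0 < Q.eval y := by
      intro y hy
      rw [hQeval]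
      exact Finset.prod_pos fun i hi => Dp_eval_pos _ _ (hts i hi).1 (hts i hi).2 hy
    have hSeval : ∀ y : ℝ, S.eval y =
        ∑ i ∈ s, (w i * (1 - 2 * t i)) * ∏ j ∈ s.erase i, (Dp (t j)).eval y := by
      intro y
      rw [hSdef, eval_finset_sum]
      exact Finset.sum_congr rfl fun i _ => by rw [eval_mul, eval_C, eval_prod]
    have hIdent1 : ∀ y : ℝ, 0 < y →
        (∑ i ∈ s, (w i * ft (t i) y + w i * ft (t i) (1/y))) * Q.eval y =
          (y - 1)^2 * S.eval y := by
      intro y hy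
      rw [Finset.sum_mul, hSeval, Finset.mul_sum]
      apply Finset.sum_congr rfl
      intro i hi
      have hQe : Q.eval y = (Dp (t i)).eval y * ∏ j ∈ s.erase i, (Dp (t j)).eval y := by
        rw [hQeval]
        exact (Finset.mul_prod_erase _ _ hi).symm
      rw [hQe, Dp_eval]
      have hk := ft_pair (t i) y (hts i hi).1 (hts i hi).2.le hy
      linear_combination (w i * ∏ j ∈ s.erase i, (Dp (t j)).eval y) * hk
    set β : ℝ := ∏ i ∈ s, (t i * (1 - t i)) with hβdef
    have hβ0 : 0 ≤ β := Finset.prod_nonneg fun i hi =>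
      mul_nonneg (hts i hi).1.le (by linarith [(hts i hi).2])
    have hβ1 : β ≤ 1 := by
      rw [hβdef]
      apply Finset.prod_le_one
      · intro i hi; exact mul_nonneg (hts i hi).1.le (by linarith [(hts i hi).2])
      · intro i hi; nlinarith [(hts i hi).1, (hts i hi).2]
    -- eval of Pp
    have hPe : ∀ y : ℝ, Pp.eval y = (m:ℝ)^2 * y * S.eval y - Q.eval y +
        β * (y - 1)^(2 * s.card) := by
      intro y
      rw [hPpdef]
      rw [eval_add, eval_sub, eval_mul, eval_mul, eval_C, eval_X]
      have h5 : eval y (∏ i ∈ s, Fp (t i)) = β * (y - 1)^(2 * s.card) := by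
        rw [eval_prod, pow_mul, ← Finset.prod_const ((y-1)^2), ← Finset.prod_mul_distrib]
        exact Finset.prod_congr rfl fun i _ => Fp_eval (t i) y
      rw [h5, hQeval]
    -- degree bound on Pp
    have hSdeg : S.natDegree ≤ 2 * (s.card - 1) := by
      rw [hSdef]
      apply Polynomial.natDegree_sum_le_of_forall_le
      intro i hi
      refine le_trans natDegree_mul_le ?_
      rw [natDegree_C]
      have h1 := Polynomial.natDegree_prod_le (s.erase i) (fun j => Dp (t j))
      have h2 : ∑ j ∈ s.erase i, (Dp (t j)).natDegree ≤ ∑ j ∈ s.erase i, 2 :=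
        Finset.sum_le_sum fun j _ => Dp_natDegree (t j)
      rw [Finset.sum_const, Finset.card_erase_of_mem hi, smul_eq_mul] at h2
      omega
    have hQFdeg : ((∏ i ∈ s, Fp (t i)) - Q).natDegree ≤ 2 * s.card - 1 := by
      have hQexp : Q = ∑ T ∈ s.powerset, (∏ i ∈ T, Fp (t i)) * X ^ (s \ T).card := by
        rw [hQdef, Finset.prod_congr rfl fun i _ => Dp_eq (t i), Finset.prod_add]
        exact Finset.sum_congr rfl fun T _ => by rw [Finset.prod_const]
      have hsmem : s ∈ s.powerset := Finset.mem_powerset_self s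
      have hfs : (∏ i ∈ s, Fp (t i)) * (X:ℝ[X]) ^ (s \ s).card = ∏ i ∈ s, Fp (t i) := by
        rw [Finset.sdiff_self, Finset.card_empty, pow_zero, mul_one]
      have hQ2 : (∏ i ∈ s, Fp (t i)) - Q =
          -∑ T ∈ s.powerset.erase s, (∏ i ∈ T, Fp (t i)) * X ^ (s \ T).card := by
        rw [hQexp, ← Finset.add_sum_erase s.powerset _ hsmem, hfs]
        ring
      rw [hQ2, natDegree_neg]
      apply Polynomial.natDegree_sum_le_of_forall_le
      intro T hT
      have hTmem := Finset.mem_erase.mp hT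
      have hTsub : T ⊆ s := Finset.mem_powerset.mp hTmem.2
      have hTlt : T.card < s.card :=
        Finset.card_lt_card (Finset.ssubset_iff_subset_ne.mpr ⟨hTsub, hTmem.1⟩)
      refine le_trans natDegree_mul_le ?_
      have h1 : (∏ i ∈ T, Fp (t i)).natDegree ≤ 2 * T.card := by
        refine le_trans (Polynomial.natDegree_prod_le _ _) ?_
        have h2 : ∑ j ∈ T, (Fp (t j)).natDegree ≤ ∑ j ∈ T, 2 :=
          Finset.sum_le_sum fun j _ => Fp_natDegree (t j)
        rw [Finset.sum_const, smul_eq_mul] at h2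
        omega
      have h2 : ((X:ℝ[X]) ^ (s \ T).card).natDegree = (s \ T).card := natDegree_X_pow _
      have h3 : (s \ T).card = s.card - T.card := Finset.card_sdiff_of_subset hTsub
      omega
    have hPdeg : Pp.natDegree ≤ 2 * s.card - 1 := by
      have h0 : Pp = C ((m:ℝ)^2) * X * S + ((∏ i ∈ s, Fp (t i)) - Q) := by
        rw [hPpdef]; ring
      rw [h0]
      refine le_trans (natDegree_add_le _ _) ?_
      rw [max_le_iff]
      constructor
      · have hCX : (C ((m:ℝ)^2) * (X:ℝ[X])).natDegree ≤ 1 :=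
          le_trans natDegree_mul_le (by rw [natDegree_C, natDegree_X])
        have := natDegree_mul_le (p := C ((m:ℝ)^2) * (X:ℝ[X])) (q := S)
        omega
      · exact hQFdeg
    clear_value S Q Pp
    -- the boundedness hypothesis
    obtain ⟨M, δ, hδ, hM⟩ := hbound
    have hMnn : 0 ≤ M := by
      have := hM (1 + δ/2) (by linarith) (by intro h; linarith [h])
        (by rw [add_sub_cancel_left, abs_of_pos (by linarith)]; linarith)
      exact le_trans (abs_nonneg _) this
    -- the error function
    set E : ℝ → ℝ := fun y => (∑ i, w i * ft (t i) y) - Real.log y with hEdef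
    have hGE : ∀ y : ℝ, 0 < y →
        (∑ i ∈ s, (w i * ft (t i) y + w i * ft (t i) (1/y))) =
          E y + E (1/y) + (1/(m:ℝ)^2) * (y + 1/y - 2) := by
      intro y hy
      rw [Finset.sum_add_distrib]
      have h1 := hsplit y
      have h2 := hsplit (1/y)
      have h3 := hpair0 y hy
      have h4 : Real.log (1/y) = -Real.log y := by rw [one_div, Real.log_inv]
      simp only [hEdef]
      rw [h4]
      linarith
    have hGE2 : ∀ y : ℝ, 0 < y →
        ((m:ℝ)^2 * y) * (∑ i ∈ s, (w i * ft (t i) y + w i * ft (t i) (1/y))) =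
          (m:ℝ)^2 * y * (E y + E (1/y)) + (y - 1)^2 * 1 := by
      intro y hy
      rw [hGE y hy]
      field_simp
      ring
    have hE : ∀ y : ℝ, 0 < y → y ≠ 1 → |y - 1| < δ → |E y| ≤ M * |y - 1|^(2*m) := by
      intro y hy0 hy1 hyd
      have h1 := hM y hy0 hy1 hyd
      have hne : ((y:ℝ) - 1) ≠ 0 := sub_ne_zero.mpr hy1
      have hne2 : (0:ℝ) < |(y - 1)^(2*m)| := abs_pos.mpr (pow_ne_zero _ hne)
      rw [abs_div, div_le_iff₀ hne2] at h1
      have hEy : |E y| = |Real.log y - ∑ i, w i * ft (t i) y| := by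
        rw [hEdef]
        exact abs_sub_comm _ _
      rw [hEy]
      calc |Real.log y - ∑ i, w i * ft (t i) y| ≤ M * |(y - 1)^(2*m)| := h1
        _ = M * |y - 1|^(2*m) := by rw [abs_pow]
    clear_value E
    -- the bound on Pp near 1
    set δ' : ℝ := min (δ/2) (1/2) with hδ'def
    have hδ'pos : 0 < δ' := by
      rw [hδ'def]
      exact lt_min (by linarith) (by norm_num)
    set Cb : ℝ := (m:ℝ)^2 * 2 * 4^s.card * (M * (1 + 2^(2*m))) + 1 with hCbdef
    have hPbound : ∀ y : ℝ, y ≠ 1 → |y - 1| < δ' → |Pp.eval y| ≤ Cb * |y - 1|^(2 * s.card) := by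
      intro y hy1 hyδ
      have hy2 : |y - 1| < 1/2 := lt_of_lt_of_le hyδ (min_le_right _ _)
      have hyδ2 : |y - 1| < δ/2 := lt_of_lt_of_le hyδ (min_le_left _ _)
      have habs := abs_lt.mp hy2
      have hy0 : 0 < y := by linarith [habs.1]
      have hyhalf : 1/2 < y := by linarith [habs.1]
      have hylt : y < 2 := by linarith [habs.2]
      have hyd : |y - 1| < δ := by linarith
      have hiy0 : 0 < 1/y := by positivity
      have hiy1 : 1/y ≠ 1 := by
        intro h
        rw [div_eq_one_iff_eq (ne_of_gt hy0)] at h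
        exact hy1 h.symm
      have hinvb : |1/y - 1| ≤ 2 * |y - 1| := by
        have hrw : 1/y - 1 = (1 - y)/y := by field_simp
        rw [hrw, abs_div, abs_of_pos hy0, div_le_iff₀ hy0, abs_sub_comm]
        nlinarith [abs_nonneg (y - 1)]
      have hinvδ : |1/y - 1| < δ := by linarith
      have hE1 := hE y hy0 hy1 hyd
      have hE2 : |E (1/y)| ≤ M * 2^(2*m) * |y - 1|^(2*m) := by
        have h1 := hE (1/y) hiy0 hiy1 hinvδ
        have h2 : |1/y - 1|^(2*m) ≤ (2 * |y - 1|)^(2*m) :=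
          pow_le_pow_left₀ (abs_nonneg _) hinvb (2*m)
        have h3 : M * |1/y - 1|^(2*m) ≤ M * (2 * |y - 1|)^(2*m) :=
          mul_le_mul_of_nonneg_left h2 hMnn
        have h4 : M * (2 * |y - 1|)^(2*m) = M * 2^(2*m) * |y - 1|^(2*m) := by
          rw [mul_pow]; ring
        linarith
      -- bound on |Q.eval y|
      have hQb : |Q.eval y| ≤ 4^s.card := by
        rw [hQeval, Finset.abs_prod]
        have hterm : ∀ i ∈ s, |(Dp (t i)).eval y| ≤ 4 := by
          intro i hi
          rw [Dp_eval, abs_mul]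
          have hti := hts i hi
          have ha : |t i * (y - 1) + 1| ≤ 2 := by
            have h7 := abs_add_le (t i * (y - 1)) 1
            have h5 : |t i * (y - 1)| = t i * |y - 1| := by
              rw [abs_mul, abs_of_pos hti.1]
            have h6 : t i * |y - 1| ≤ |y - 1| := by
              nlinarith [abs_nonneg (y - 1), hti.1, hti.2]
            simp only [abs_one] at h7
            linarith
          have hb : |(1 - t i) * (y - 1) + 1| ≤ 2 := by
            have h7 := abs_add_le ((1 - t i) * (y - 1)) 1
            have h5 : |(1 - t i) * (y - 1)| = (1 - t i) * |y - 1| := by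
              rw [abs_mul, abs_of_pos (by linarith [hti.2] : (0:ℝ) < 1 - t i)]
            have h6 : (1 - t i) * |y - 1| ≤ |y - 1| := by
              nlinarith [abs_nonneg (y - 1), hti.1, hti.2]
            simp only [abs_one] at h7
            linarith
          nlinarith [abs_nonneg (t i * (y - 1) + 1), abs_nonneg ((1 - t i) * (y - 1) + 1)]
        calc ∏ i ∈ s, |(Dp (t i)).eval y| ≤ ∏ i ∈ s, (4:ℝ) :=
              Finset.prod_le_prod (fun i _ => abs_nonneg _) hterm
          _ = 4^s.card := Finset.prod_const 4
      -- the key evaluation identity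
      have hpow : (y - 1)^(2*m) = (y - 1)^(2*s.card) * (y - 1)^2 := by
        rw [← pow_add]
        congr 1
        omega
      have heval : (y - 1)^2 * Pp.eval y =
          (m:ℝ)^2 * y * Q.eval y * (E y + E (1/y)) + β * (y - 1)^(2*m) := by
        have h1 := hPe y
        have h2 := hIdent1 y hy0
        have h3 := hGE2 y hy0
        rw [hpow]
        linear_combination (y-1)^2 * h1 - ((m:ℝ)^2 * y) * h2 + Q.eval y * h3
      -- absolute value bounds
      have hyabs : |y| ≤ 2 := by rw [abs_of_pos hy0]; linarith
      have hEE : |E y + E (1/y)| ≤ M * (1 + 2^(2*m)) * |y - 1|^(2*m) := by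
        have h7 := abs_add_le (E y) (E (1/y))
        nlinarith [hE1, hE2]
      have hA : |(m:ℝ)^2 * y * Q.eval y * (E y + E (1/y))| ≤
          (m:ℝ)^2 * 2 * 4^s.card * (M * (1 + 2^(2*m)) * |y - 1|^(2*m)) := by
        rw [abs_mul, abs_mul, abs_mul, abs_of_pos hm2]
        gcongr <;> first | exact hQb | exact hEE
      have hB : |β * (y - 1)^(2*m)| ≤ 1 * |y - 1|^(2*m) := by
        rw [abs_mul, abs_pow]
        have h7 : |β| ≤ 1 := by rwa [abs_of_nonneg hβ0]
        exact mul_le_mul h7 le_rfl (by positivity) one_pos.le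
      have hfinal : |(y - 1)^2 * Pp.eval y| ≤ Cb * |y - 1|^(2*m) := by
        rw [heval]
        calc |(m:ℝ)^2 * y * Q.eval y * (E y + E (1/y)) + β * (y - 1)^(2*m)|
            ≤ |(m:ℝ)^2 * y * Q.eval y * (E y + E (1/y))| + |β * (y - 1)^(2*m)| := abs_add_le _ _
          _ ≤ (m:ℝ)^2 * 2 * 4^s.card * (M * (1 + 2^(2*m)) * |y - 1|^(2*m)) + 1 * |y - 1|^(2*m) :=
              add_le_add hA hB
          _ = Cb * |y - 1|^(2*m) := by rw [hCbdef]; ring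
      -- divide by |y-1|^2
      have habspow : |y - 1|^(2*m) = |y - 1|^(2*s.card) * |y - 1|^2 := by
        rw [← pow_add]
        congr 1
        omega
      have hy1abs : 0 < |y - 1|^2 :=
        pow_pos (abs_pos.mpr (sub_ne_zero.mpr hy1)) 2
      have h10 : |Pp.eval y| * |y - 1|^2 ≤ (Cb * |y - 1|^(2*s.card)) * |y - 1|^2 := by
        have h11 : |Pp.eval y| * |y - 1|^2 = |(y - 1)^2 * Pp.eval y| := by
          rw [abs_mul, abs_pow]; ring
        rw [h11]
        calc |(y - 1)^2 * Pp.eval y| ≤ Cb * |y - 1|^(2*m) := hfinal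
          _ = (Cb * |y - 1|^(2*s.card)) * |y - 1|^2 := by rw [habspow]; ring
      exact le_of_mul_le_mul_right h10 hy1abs
    -- Pp vanishes
    have hdvd := dvd_of_small (2 * s.card) Pp Cb δ' hδ'pos hPbound
    have hP0 : Pp = 0 := by
      by_contra hne
      have h1 := Polynomial.natDegree_le_of_dvd hdvd hne
      rw [natDegree_pow, ndXC, mul_one] at h1
      omega
    -- conclusion at x
    have hx0 := hPe x
    rw [hP0, eval_zero] at hx0
    have hQge : β * (x - 1)^(2 * s.card) ≤ Q.eval x := by
      have hβx : β * (x - 1)^(2*s.card) = ∏ i ∈ s, (t i * (1 - t i) * (x - 1)^2) := by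
        rw [Finset.prod_mul_distrib, Finset.prod_const, ← pow_mul, hβdef]
      rw [hβx, hQeval]
      apply Finset.prod_le_prod
      · intro i hi
        have hti := hts i hi
        have h1 : (0:ℝ) ≤ 1 - t i := by linarith [hti.2]
        exact mul_nonneg (mul_nonneg hti.1.le h1) (sq_nonneg _)
      · intro i hi
        rw [Dp_eval]
        have h1 : (t i*(x-1)+1)*((1-t i)*(x-1)+1) = t i*(1-t i)*(x-1)^2 + x := by ring
        rw [h1]
        linarith
    have hSx : 0 ≤ S.eval x := by
      have h2 : 0 ≤ (m:ℝ)^2 * x * S.eval x := by linarith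
      have h3 : 0 < (m:ℝ)^2 * x := by positivity
      nlinarith
    have hId := hIdent1 x hx
    have hQx := hQpos x hx
    nlinarith [hId, hQx, mul_nonneg (sq_nonneg (x - 1)) hSx]
  rw [hsplit x, hsplit (1/x)]
  rw [Finset.sum_add_distrib] at key
  have h0 := hpair0 x hx
  linarith
end

section
/- Let t ∈ [0,1], let n ≥ 1, and for an n×n positive definite Hermitian complex matrix M define f_t(M) = (M − I)·(t·M + (1−t)·I)⁻¹ (the matrix t·M + (1−t)·I is positive definite, hence invertible). Then f_t is operator concave on positive definite matrices: for any n×n positive definite Hermitian complex matrices A, B and any λ ∈ [0,1], the matrix f_t(λ·A + (1−λ)·B) − λ·f_t(A) − (1−λ)·f_t(B) is positive semidefinite. -/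
open scoped ComplexOrder

open Matrix


private lemma psd_smul' {n : ℕ} {M : Matrix (Fin n) (Fin n) ℂ} (hM : M.PosSemidef)
    {r : ℝ} (hr : 0 ≤ r) : (r • M).PosSemidef := by
  refine PosSemidef.of_dotProduct_mulVec_nonneg ?_ (fun x => ?_)
  · unfold Matrix.IsHermitian at *
    rw [conjTranspose_smul, hM.1]; simp
  · rw [smul_mulVec, dotProduct_smul, Complex.real_smul]
    exact mul_nonneg (by positivity) (hM.dotProduct_mulVec_nonneg x)

private lemma herm_smul' {n : ℕ} {M : Matrix (Fin n) (Fin n) ℂ} (hM : M.IsHermitian)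
    (r : ℝ) : (r • M).IsHermitian := by
  unfold Matrix.IsHermitian at *
  rw [conjTranspose_smul, hM]; simp

private lemma posDef_combo {n : ℕ} {X Y : Matrix (Fin n) (Fin n) ℂ} (hX : X.PosDef)
    (hY : Y.PosDef) {l : ℝ} (hl0 : 0 ≤ l) (hl1 : l ≤ 1) :
    (l • X + (1 - l) • Y).PosDef := by
  refine PosDef.of_dotProduct_mulVec_pos ((herm_smul' hX.1 l).add (herm_smul' hY.1 (1 - l))) (fun x hx => ?_)
  rw [add_mulVec, dotProduct_add, smul_mulVec, smul_mulVec,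
    dotProduct_smul, dotProduct_smul, Complex.real_smul, Complex.real_smul]
  rcases hl0.eq_or_lt with h | h
  · rw [← h]; simpa using hY.dotProduct_mulVec_pos hx
  · exact add_pos_of_pos_of_nonneg (mul_pos (by positivity) (hX.dotProduct_mulVec_pos hx))
      (mul_nonneg (Complex.zero_le_real.mpr (by linarith)) (hY.posSemidef.dotProduct_mulVec_nonneg x))

/-- Quadratic lower bound for the inverse: `x*y + y*x - y*Xy ≤ x*X⁻¹x`. -/
private lemma inv_dot_lower {n : ℕ} {X : Matrix (Fin n) (Fin n) ℂ} (hX : X.PosDef)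
    (x y : Fin n → ℂ) :
    star x ⬝ᵥ y + star y ⬝ᵥ x - star y ⬝ᵥ (X *ᵥ y) ≤ star x ⬝ᵥ (X⁻¹ *ᵥ x) := by
  have hdet : IsUnit X.det := isUnit_iff_ne_zero.mpr hX.det_pos.ne'
  have hXXinv : X * X⁻¹ = 1 := mul_nonsing_inv _ hdet
  have hXinvX : X⁻¹ * X = 1 := nonsing_inv_mul _ hdet
  have hInvH : (X⁻¹)ᴴ = X⁻¹ := hX.posSemidef.inv.1
  have h0 : 0 ≤ star (X⁻¹ *ᵥ x - y) ⬝ᵥ (X *ᵥ (X⁻¹ *ᵥ x - y)) := hX.posSemidef.dotProduct_mulVec_nonneg _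
  have hstaru : ∀ v : Fin n → ℂ, star (X⁻¹ *ᵥ x) ⬝ᵥ v = star x ⬝ᵥ (X⁻¹ *ᵥ v) := by
    intro v; rw [star_mulVec, ← dotProduct_mulVec, hInvH]
  have expand : star (X⁻¹ *ᵥ x - y) ⬝ᵥ (X *ᵥ (X⁻¹ *ᵥ x - y)) =
      star x ⬝ᵥ (X⁻¹ *ᵥ x) - star x ⬝ᵥ y - star y ⬝ᵥ x + star y ⬝ᵥ (X *ᵥ y) := by
    rw [star_sub, mulVec_sub, sub_dotProduct, dotProduct_sub, dotProduct_sub,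
      mulVec_mulVec, hXXinv, one_mulVec, hstaru, hstaru, mulVec_mulVec, hXinvX, one_mulVec]
    ring
  rw [expand] at h0
  rw [← sub_nonneg]
  convert h0 using 1
  ring

/-- Operator convexity of the matrix inverse. -/
private lemma inv_convex {n : ℕ} {X Y : Matrix (Fin n) (Fin n) ℂ} (hX : X.PosDef)
    (hY : Y.PosDef) {l : ℝ} (hl0 : 0 ≤ l) (hl1 : l ≤ 1) :
    (l • X⁻¹ + (1 - l) • Y⁻¹ - (l • X + (1 - l) • Y)⁻¹).PosSemidef := by
  set Z := l • X + (1 - l) • Y with hZdef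
  have hZ : Z.PosDef := posDef_combo hX hY hl0 hl1
  have hZZinv : Z * Z⁻¹ = 1 := mul_nonsing_inv _ (isUnit_iff_ne_zero.mpr hZ.det_pos.ne')
  refine PosSemidef.of_dotProduct_mulVec_nonneg (((herm_smul' hX.posSemidef.inv.1 l).add (herm_smul' hY.posSemidef.inv.1 (1-l))).sub
    hZ.posSemidef.inv.1) (fun x => ?_)
  set y := Z⁻¹ *ᵥ x with hy
  have hZy : Z *ᵥ y = x := by rw [hy, mulVec_mulVec, hZZinv, one_mulVec]
  have h1 := inv_dot_lower hX x y
  have h2 := inv_dot_lower hY x y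
  have hl0' : (0:ℂ) ≤ (l:ℂ) := by positivity
  have hl1' : (0:ℂ) ≤ ((1-l:ℝ):ℂ) := by
    have : (0:ℝ) ≤ 1 - l := by linarith
    positivity
  have hsum := add_le_add (mul_le_mul_of_nonneg_left h1 hl0')
    (mul_le_mul_of_nonneg_left h2 hl1')
  have hb : star y ⬝ᵥ x = (l:ℂ) * (star y ⬝ᵥ (X *ᵥ y)) + ((1-l:ℝ):ℂ) * (star y ⬝ᵥ (Y *ᵥ y)) := by
    rw [← hZy]
    nth_rewrite 1 [hZdef]
    rw [add_mulVec, dotProduct_add, smul_mulVec, smul_mulVec,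
      dotProduct_smul, dotProduct_smul, Complex.real_smul, Complex.real_smul]
  have heq : (l:ℂ) * (star x ⬝ᵥ y + star y ⬝ᵥ x - star y ⬝ᵥ (X *ᵥ y))
      + ((1-l:ℝ):ℂ) * (star x ⬝ᵥ y + star y ⬝ᵥ x - star y ⬝ᵥ (Y *ᵥ y))
      = star x ⬝ᵥ (Z⁻¹ *ᵥ x) := by
    rw [← hy]
    have hc : ((1-l:ℝ):ℂ) = 1 - (l:ℂ) := by push_cast; ring
    rw [hc] at hb ⊢
    linear_combination hb
  rw [heq] at hsum
  rw [sub_mulVec, add_mulVec, dotProduct_sub, dotProduct_add, smul_mulVec,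
    smul_mulVec, dotProduct_smul, dotProduct_smul, Complex.real_smul, Complex.real_smul]
  rw [sub_nonneg]
  exact hsum

/-- The matrix version of `f_t`: for a positive definite Hermitian matrix `M`,
`f_t(M) = (M - I)·(t·M + (1-t)·I)⁻¹`. -/
noncomputable def ftMat {n : ℕ} (t : ℝ) (M : Matrix (Fin n) (Fin n) ℂ) :
    Matrix (Fin n) (Fin n) ℂ :=
  (M - 1) * (t • M + (1 - t) • (1 : Matrix (Fin n) (Fin n) ℂ))⁻¹

/-- For `t ∈ [0,1]`, the function `f_t(M) = (M - I)(tM + (1-t)I)⁻¹` is operator concave on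
positive definite Hermitian complex matrices: for positive definite `A, B` and `λ ∈ [0,1]`,
`f_t(λA + (1-λ)B) - λ·f_t(A) - (1-λ)·f_t(B)` is positive semidefinite. -/
theorem ftMat_operator_concave {n : ℕ} (hn : 1 ≤ n) (t : ℝ) (ht : t ∈ Set.Icc (0 : ℝ) 1)
    (A B : Matrix (Fin n) (Fin n) ℂ) (hA : A.PosDef) (hB : B.PosDef)
    (l : ℝ) (hl : l ∈ Set.Icc (0 : ℝ) 1) :
    (ftMat t (l • A + (1 - l) • B) - l • ftMat t A - (1 - l) • ftMat t B).PosSemidef := by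
  obtain ⟨ht0, ht1⟩ := ht
  obtain ⟨hl0, hl1⟩ := hl
  rcases ht0.eq_or_lt with h0 | h0
  · -- t = 0 : the map is affine
    subst h0
    simp only [ftMat, zero_smul, zero_add, sub_zero, one_smul, inv_one, mul_one]
    have h : (l • A + (1 - l) • B - 1) - l • (A - 1) - (1 - l) • (B - 1)
        = (0 : Matrix (Fin n) (Fin n) ℂ) := by module
    rw [h]
    exact Matrix.PosSemidef.zero
  · -- 0 < t
    have key : ∀ M : Matrix (Fin n) (Fin n) ℂ, M.PosDef →
        ftMat t M = t⁻¹ • ((1 : Matrix (Fin n) (Fin n) ℂ)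
          - (t • M + (1 - t) • (1 : Matrix (Fin n) (Fin n) ℂ))⁻¹) := by
      intro M hM
      set N := t • M + (1 - t) • (1 : Matrix (Fin n) (Fin n) ℂ) with hNdef
      have hN : N.PosDef := posDef_combo hM Matrix.PosDef.one h0.le ht1
      have hNN : N * N⁻¹ = 1 := mul_nonsing_inv _ (isUnit_iff_ne_zero.mpr hN.det_pos.ne')
      have hM1 : M - 1 = t⁻¹ • (N - 1) := by
        rw [hNdef]
        match_scalars <;> field_simp <;> ring
      rw [ftMat, ← hNdef, hM1, smul_mul_assoc, sub_mul, one_mul, hNN]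
    have hC : (l • A + (1 - l) • B).PosDef := posDef_combo hA hB hl0 hl1
    have hNA : (t • A + (1 - t) • (1 : Matrix (Fin n) (Fin n) ℂ)).PosDef :=
      posDef_combo hA Matrix.PosDef.one h0.le ht1
    have hNB : (t • B + (1 - t) • (1 : Matrix (Fin n) (Fin n) ℂ)).PosDef :=
      posDef_combo hB Matrix.PosDef.one h0.le ht1
    rw [key _ hC, key _ hA, key _ hB]
    have hNCeq : t • (l • A + (1 - l) • B) + (1 - t) • (1 : Matrix (Fin n) (Fin n) ℂ)
        = l • (t • A + (1 - t) • (1 : Matrix (Fin n) (Fin n) ℂ))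
          + (1 - l) • (t • B + (1 - t) • (1 : Matrix (Fin n) (Fin n) ℂ)) := by
      module
    rw [hNCeq]
    have main := inv_convex hNA hNB hl0 hl1
    have hrw : t⁻¹ • ((1 : Matrix (Fin n) (Fin n) ℂ)
          - (l • (t • A + (1 - t) • (1 : Matrix (Fin n) (Fin n) ℂ))
            + (1 - l) • (t • B + (1 - t) • (1 : Matrix (Fin n) (Fin n) ℂ)))⁻¹)
        - l • (t⁻¹ • ((1 : Matrix (Fin n) (Fin n) ℂ)
            - (t • A + (1 - t) • (1 : Matrix (Fin n) (Fin n) ℂ))⁻¹))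
        - (1 - l) • (t⁻¹ • ((1 : Matrix (Fin n) (Fin n) ℂ)
            - (t • B + (1 - t) • (1 : Matrix (Fin n) (Fin n) ℂ))⁻¹))
        = t⁻¹ • (l • (t • A + (1 - t) • (1 : Matrix (Fin n) (Fin n) ℂ))⁻¹
            + (1 - l) • (t • B + (1 - t) • (1 : Matrix (Fin n) (Fin n) ℂ))⁻¹
            - (l • (t • A + (1 - t) • (1 : Matrix (Fin n) (Fin n) ℂ))
              + (1 - l) • (t • B + (1 - t) • (1 : Matrix (Fin n) (Fin n) ℂ)))⁻¹) := by
      module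
    rw [hrw]
    exact psd_smul' main (by positivity)
end

section
/- Let t ∈ (0,1], let n ≥ 1, and let ρ, σ be n×n positive definite Hermitian complex matrices with spectral decompositions ρ = Σ_j λ_j P_j and σ = Σ_k μ_k Q_k, where λ_j, μ_k > 0 and P_j, Q_k are the orthogonal spectral projections. Define D_{−f_t}(ρ‖σ) = −Σ_{j,k} λ_j f_t(μ_k·λ_j^{−1})·tr(P_j Q_k). Then D_{−f_t}(ρ‖σ) = −inf_Z (1/t)·[ tr(ρ) + tr(ρ(Z + Z*)) + (1−t)·tr(ρ Z* Z) + t·tr(σ Z Z*) ], where the infimum is over all n×n complex matrices Z (each quantity inside the infimum is a real number since ρ and σ are Hermitian). -/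
open scoped ComplexOrder Matrix

open Matrix

private lemma trace_re_nonneg' {n : ℕ} {A : Matrix (Fin n) (Fin n) ℂ} (hA : A.PosSemidef) :
    0 ≤ A.trace.re := by
  have h : ∀ i, 0 ≤ (A i i).re := by
    intro i
    have := hA.re_dotProduct_nonneg (Pi.single i 1)
    simpa [dotProduct, Matrix.mulVec, Pi.single_apply, Finset.sum_ite_eq,
      dotProduct_single] using this
  simpa [Matrix.trace, Matrix.diag, Complex.re_sum] using Finset.sum_nonneg fun i _ => h i

private lemma quad1_nonneg {n : ℕ} {A : Matrix (Fin n) (Fin n) ℂ} (hA : A.PosSemidef)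
    (W : Matrix (Fin n) (Fin n) ℂ) : 0 ≤ (Matrix.trace (A * (Wᴴ * W))).re := by
  have h1 : Matrix.trace (A * (Wᴴ * W)) = Matrix.trace (W * A * Wᴴ) := by
    rw [← Matrix.mul_assoc, Matrix.trace_mul_cycle, Matrix.mul_assoc]
  rw [h1]
  exact trace_re_nonneg' (hA.mul_mul_conjTranspose_same W)

private lemma quad2_nonneg {n : ℕ} {A : Matrix (Fin n) (Fin n) ℂ} (hA : A.PosSemidef)
    (W : Matrix (Fin n) (Fin n) ℂ) : 0 ≤ (Matrix.trace (A * (W * Wᴴ))).re := by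
  have h1 : Matrix.trace (A * (W * Wᴴ)) = Matrix.trace (Wᴴ * A * W) := by
    rw [← Matrix.mul_assoc, Matrix.trace_mul_comm, Matrix.mul_assoc, ← Matrix.mul_assoc]
  rw [h1]
  exact trace_re_nonneg' (hA.conjTranspose_mul_mul_same W)

private lemma expand_lemma {n : ℕ} (A B Z₀ W : Matrix (Fin n) (Fin n) ℂ) (c d : ℂ)
    (hA : Aᴴ = A) (hB : Bᴴ = B) (hc : star c = c) (hd : star d = d)
    (h1 : A + c • (Z₀ * A) + d • (B * Z₀) = 0) :
    trace (A * ((W + Z₀) + (W + Z₀)ᴴ)) + c * trace (A * ((W + Z₀)ᴴ * (W + Z₀)))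
      + d * trace (B * ((W + Z₀) * (W + Z₀)ᴴ))
    = trace (A * (Z₀ + Z₀ᴴ)) + c * trace (A * (Z₀ᴴ * Z₀)) + d * trace (B * (Z₀ * Z₀ᴴ))
      + c * trace (A * (Wᴴ * W)) + d * trace (B * (W * Wᴴ)) := by
  have hW2 : trace (Wᴴ * A) + c * trace (Wᴴ * (Z₀ * A)) + d * trace (Wᴴ * (B * Z₀)) = 0 := by
    have := congrArg (fun M => Matrix.trace (Wᴴ * M)) h1
    simpa [Matrix.mul_add, Matrix.mul_smul, Matrix.trace_add, Matrix.trace_smul,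
      smul_eq_mul] using this
  have h1' : A + c • (A * Z₀ᴴ) + d • (Z₀ᴴ * B) = 0 := by
    have := congrArg Matrix.conjTranspose h1
    simpa [Matrix.conjTranspose_add, Matrix.conjTranspose_smul, Matrix.conjTranspose_mul,
      hA, hB, hc, hd] using this
  have hW1 : trace (A * W) + c * trace ((A * Z₀ᴴ) * W) + d * trace ((Z₀ᴴ * B) * W) = 0 := by
    have := congrArg (fun M => Matrix.trace (M * W)) h1'
    simpa [Matrix.add_mul, Matrix.smul_mul, Matrix.trace_add, Matrix.trace_smul,
      smul_eq_mul] using this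
  have e1 : trace (A * Wᴴ) = trace (Wᴴ * A) := trace_mul_comm _ _
  have e2 : trace (A * (Wᴴ * Z₀)) = trace (Wᴴ * (Z₀ * A)) := by
    rw [← Matrix.mul_assoc, trace_mul_comm, ← Matrix.mul_assoc, trace_mul_comm]
  have e3 : trace (A * (Z₀ᴴ * W)) = trace ((A * Z₀ᴴ) * W) := by rw [Matrix.mul_assoc]
  have e4 : trace (B * (W * Z₀ᴴ)) = trace ((Z₀ᴴ * B) * W) := by
    rw [← Matrix.mul_assoc, trace_mul_comm, ← Matrix.mul_assoc]
  have e5 : trace (B * (Z₀ * Wᴴ)) = trace (Wᴴ * (B * Z₀)) := by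
    rw [← Matrix.mul_assoc, trace_mul_comm]
  simp only [Matrix.conjTranspose_add, Matrix.mul_add, Matrix.add_mul, Matrix.trace_add]
  rw [e1, e2, e3, e4, e5]
  linear_combination hW1 + hW2

/-- Variational expression for the standard `(-f_t)`-divergence (Brown–Fawzi–Fawzi):
for `t ∈ (0,1]` and positive definite Hermitian `ρ = ∑_j λ_j P_j`, `σ = ∑_k μ_k Q_k`
(spectral decompositions with `λ_j, μ_k > 0` and orthogonal spectral projections `P_j, Q_k`),
`D_{-f_t}(ρ‖σ) = -∑_{j,k} λ_j f_t(μ_k λ_j⁻¹) tr(P_j Q_k)` satisfies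
`D_{-f_t}(ρ‖σ) = -inf_Z (1/t)[tr ρ + tr(ρ(Z+Z*)) + (1-t) tr(ρ Z*Z) + t tr(σ Z Z*)]`
with the infimum over all `n × n` complex matrices `Z`. -/
theorem Dft_variational (t : ℝ) (ht : t ∈ Set.Ioc (0 : ℝ) 1) (n : ℕ) (hn : 1 ≤ n)
    (ρ σ : Matrix (Fin n) (Fin n) ℂ) (hρ : ρ.PosDef) (hσ : σ.PosDef)
    (J K : ℕ) (lam : Fin J → ℝ) (mu : Fin K → ℝ)
    (P : Fin J → Matrix (Fin n) (Fin n) ℂ) (Q : Fin K → Matrix (Fin n) (Fin n) ℂ)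
    (hlam : ∀ j, 0 < lam j) (hmu : ∀ k, 0 < mu k)
    (hPherm : ∀ j, (P j).IsHermitian) (hQherm : ∀ k, (Q k).IsHermitian)
    (hPproj : ∀ j, P j * P j = P j) (hQproj : ∀ k, Q k * Q k = Q k)
    (hPorth : ∀ j j', j ≠ j' → P j * P j' = 0) (hQorth : ∀ k k', k ≠ k' → Q k * Q k' = 0)
    (hPsum : ∑ j, P j = 1) (hQsum : ∑ k, Q k = 1)
    (hρdec : ρ = ∑ j, (lam j : ℂ) • P j) (hσdec : σ = ∑ k, (mu k : ℂ) • Q k) :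
    (-∑ j, ∑ k, lam j * ft t (mu k * (lam j)⁻¹) * (Matrix.trace (P j * Q k)).re) =
      -⨅ Z : Matrix (Fin n) (Fin n) ℂ,
        (1 / t) * ((Matrix.trace ρ).re + (Matrix.trace (ρ * (Z + Zᴴ))).re +
          (1 - t) * (Matrix.trace (ρ * (Zᴴ * Z))).re +
          t * (Matrix.trace (σ * (Z * Zᴴ))).re) := by
  obtain ⟨ht0, ht1⟩ := ht
  -- the weights
  set a : Fin J → Fin K → ℝ := fun j k => (1 - t) * lam j + t * mu k with ha
  have hapos : ∀ j k, 0 < a j k := fun j k =>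
    add_pos_of_nonneg_of_pos (mul_nonneg (by linarith) (hlam j).le) (mul_pos ht0 (hmu k))
  -- the minimizer
  set Z₀ : Matrix (Fin n) (Fin n) ℂ :=
    -∑ j, ∑ k, ((lam j / a j k : ℝ) : ℂ) • (Q k * P j) with hZ₀
  -- spectral facts
  have hPρ : ∀ j, P j * ρ = (lam j : ℂ) • P j := by
    intro j
    rw [hρdec, Finset.mul_sum, Finset.sum_eq_single j]
    · rw [Matrix.mul_smul, hPproj j]
    · intro j' _ hne
      rw [Matrix.mul_smul, hPorth j j' (Ne.symm hne), smul_zero]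
    · simp
  have hρP : ∀ j, ρ * P j = (lam j : ℂ) • P j := by
    intro j
    rw [hρdec, Finset.sum_mul, Finset.sum_eq_single j]
    · rw [Matrix.smul_mul, hPproj j]
    · intro j' _ hne
      rw [Matrix.smul_mul, hPorth j' j hne, smul_zero]
    · simp
  have hσQ : ∀ k, σ * Q k = (mu k : ℂ) • Q k := by
    intro k
    rw [hσdec, Finset.sum_mul, Finset.sum_eq_single k]
    · rw [Matrix.smul_mul, hQproj k]
    · intro k' _ hne
      rw [Matrix.smul_mul, hQorth k' k hne, smul_zero]
    · simp
  -- ρ as a double sum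
  have hρQP : ρ = ∑ j, ∑ k, (lam j : ℂ) • (Q k * P j) := by
    conv_lhs => rw [← Matrix.one_mul ρ, ← hQsum, Finset.sum_mul]
    rw [Finset.sum_comm]
    refine Finset.sum_congr rfl fun k _ => ?_
    rw [hρdec, Finset.mul_sum]
    exact Finset.sum_congr rfl fun j _ => by rw [Matrix.mul_smul]
  -- Z₀ * ρ and σ * Z₀
  have hZρ : Z₀ * ρ = -∑ j, ∑ k, ((lam j / a j k * lam j : ℝ) : ℂ) • (Q k * P j) := by
    rw [hZ₀, Matrix.neg_mul, neg_inj, Finset.sum_mul]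
    refine Finset.sum_congr rfl fun j _ => ?_
    rw [Finset.sum_mul]
    refine Finset.sum_congr rfl fun k _ => ?_
    rw [Matrix.smul_mul, Matrix.mul_assoc, hPρ j, Matrix.mul_smul, smul_smul]
    rw [← Complex.ofReal_mul]
  have hσZ : σ * Z₀ = -∑ j, ∑ k, ((lam j / a j k * mu k : ℝ) : ℂ) • (Q k * P j) := by
    rw [hZ₀, Matrix.mul_neg, neg_inj, Finset.mul_sum]
    refine Finset.sum_congr rfl fun j _ => ?_
    rw [Finset.mul_sum]
    refine Finset.sum_congr rfl fun k _ => ?_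
    rw [Matrix.mul_smul, ← Matrix.mul_assoc, hσQ k, Matrix.smul_mul, smul_smul]
    rw [← Complex.ofReal_mul]
  -- the stationarity identity
  have h1 : ρ + ((1 - t : ℝ) : ℂ) • (Z₀ * ρ) + ((t : ℝ) : ℂ) • (σ * Z₀) = 0 := by
    rw [hZρ, hσZ, smul_neg, smul_neg]
    conv_lhs => rw [hρQP]
    rw [Finset.smul_sum, Finset.smul_sum]
    simp only [Finset.smul_sum, smul_smul, ← Complex.ofReal_mul]
    simp only [← Finset.sum_neg_distrib, ← Finset.sum_add_distrib]
    refine Finset.sum_eq_zero fun j _ => Finset.sum_eq_zero fun k _ => ?_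
    have h0' : (1 - t) * lam j + t * mu k ≠ 0 := by
      have := (hapos j k).ne'
      simpa [ha] using this
    have hr : lam j + -((1 - t) * (lam j / a j k * lam j)) + -(t * (lam j / a j k * mu k)) = 0 := by
      have ha' : a j k = (1 - t) * lam j + t * mu k := rfl
      have hav : a j k * (a j k)⁻¹ = 1 := mul_inv_cancel₀ (hapos j k).ne'
      linear_combination (lam j * (a j k)⁻¹) * ha' - lam j * hav
    have hC : (lam j : ℂ) + -(((1 - t) * (lam j / a j k * lam j) : ℝ) : ℂ)
        + -((t * (lam j / a j k * mu k) : ℝ) : ℂ) = 0 := by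
      have := congrArg (fun x : ℝ => (x : ℂ)) hr
      push_cast at this ⊢
      convert this using 2 <;> ring
    rw [← neg_smul, ← neg_smul, ← add_smul, ← add_smul, hC, zero_smul]
  have hc : star ((1 - t : ℝ) : ℂ) = ((1 - t : ℝ) : ℂ) := Complex.conj_ofReal _
  have hd : star ((t : ℝ) : ℂ) = ((t : ℝ) : ℂ) := Complex.conj_ofReal _
  -- value of the quadratic form at the minimizer
  have hGZ0 : trace (ρ * (Z₀ + Z₀ᴴ)) + ((1 - t : ℝ) : ℂ) * trace (ρ * (Z₀ᴴ * Z₀))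
      + ((t : ℝ) : ℂ) * trace (σ * (Z₀ * Z₀ᴴ)) = trace (ρ * Z₀) := by
    have h2 := congrArg (fun M => Matrix.trace (Z₀ᴴ * M)) h1
    simp only [Matrix.mul_add, Matrix.mul_smul, Matrix.trace_add, Matrix.trace_smul,
      smul_eq_mul, Matrix.mul_zero, Matrix.trace_zero] at h2
    have q1 : trace (ρ * (Z₀ᴴ * Z₀)) = trace (Z₀ᴴ * (Z₀ * ρ)) := by
      rw [← Matrix.mul_assoc, trace_mul_comm, ← Matrix.mul_assoc, trace_mul_comm]
    have q2 : trace (σ * (Z₀ * Z₀ᴴ)) = trace (Z₀ᴴ * (σ * Z₀)) := by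
      rw [← Matrix.mul_assoc, trace_mul_comm]
    have q3 : trace (ρ * Z₀ᴴ) = trace (Z₀ᴴ * ρ) := trace_mul_comm _ _
    rw [Matrix.mul_add, Matrix.trace_add, q1, q2, q3]
    linear_combination h2
  -- trace of ρ
  have htrρ : Matrix.trace ρ = ∑ j, ∑ k, (lam j : ℂ) * Matrix.trace (P j * Q k) := by
    conv_lhs => rw [hρdec]
    rw [Matrix.trace_sum]
    refine Finset.sum_congr rfl fun j _ => ?_
    rw [Matrix.trace_smul, smul_eq_mul, ← Finset.mul_sum]
    congr 1
    conv_lhs => rw [← Matrix.mul_one (P j), ← hQsum]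
    rw [Finset.mul_sum, Matrix.trace_sum]
  -- trace of ρ * Z₀
  have htrρZ : Matrix.trace (ρ * Z₀)
      = -∑ j, ∑ k, ((lam j / a j k * lam j : ℝ) : ℂ) * Matrix.trace (P j * Q k) := by
    rw [hZ₀, Matrix.mul_neg, Matrix.trace_neg, neg_inj]
    simp only [Matrix.mul_sum, Matrix.trace_sum]
    refine Finset.sum_congr rfl fun j _ => Finset.sum_congr rfl fun k _ => ?_
    rw [Matrix.mul_smul, Matrix.trace_smul, smul_eq_mul, ← Matrix.mul_assoc,
      Matrix.trace_mul_cycle, hPρ j, Matrix.smul_mul, Matrix.trace_smul, smul_eq_mul,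
      ← mul_assoc, ← Complex.ofReal_mul]
  -- main identity: completion of the square
  have hmain : ∀ Z : Matrix (Fin n) (Fin n) ℂ,
      (Matrix.trace (ρ * (Z + Zᴴ))).re + (1 - t) * (Matrix.trace (ρ * (Zᴴ * Z))).re
        + t * (Matrix.trace (σ * (Z * Zᴴ))).re
      = (Matrix.trace (ρ * Z₀)).re
        + (1 - t) * (Matrix.trace (ρ * ((Z - Z₀)ᴴ * (Z - Z₀)))).re
        + t * (Matrix.trace (σ * ((Z - Z₀) * (Z - Z₀)ᴴ))).re := by
    intro Z
    have hG := expand_lemma ρ σ Z₀ (Z - Z₀) _ _ hρ.1 hσ.1 hc hd h1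
    rw [sub_add_cancel] at hG
    rw [hGZ0] at hG
    have := congrArg Complex.re hG
    simpa [Complex.add_re, Complex.re_ofReal_mul] using this
  -- the value of the infimum, in closed form
  have hVc : (1 / t) * ((Matrix.trace ρ).re + (Matrix.trace (ρ * Z₀)).re)
      = ∑ j, ∑ k, lam j * ft t (mu k * (lam j)⁻¹) * (Matrix.trace (P j * Q k)).re := by
    rw [htrρ, htrρZ]
    simp only [Complex.re_sum, Complex.neg_re, Complex.re_ofReal_mul,
      ← sub_eq_add_neg, ← Finset.sum_sub_distrib, Finset.mul_sum]
    refine Finset.sum_congr rfl fun j _ => Finset.sum_congr rfl fun k _ => ?_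
    have h0' : (1 - t) * lam j + t * mu k ≠ 0 := by
      have := (hapos j k).ne'
      simpa [ha] using this
    have hden : t * (mu k * (lam j)⁻¹ - 1) + 1 ≠ 0 := by
      have h2 : t * (mu k * (lam j)⁻¹ - 1) + 1 = ((1 - t) * lam j + t * mu k) / lam j := by
        field_simp [(hlam j).ne']
        ring
      rw [h2]
      exact div_ne_zero h0' (hlam j).ne'
    have hden2 : 1 - t + t * mu k * (lam j)⁻¹ ≠ 0 := by
      have h2 : 1 - t + t * mu k * (lam j)⁻¹ = ((1 - t) * lam j + t * mu k) / lam j := by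
        field_simp [(hlam j).ne']
      rw [h2]
      exact div_ne_zero h0' (hlam j).ne'
    have ha' : a j k = (1 - t) * lam j + t * mu k := by rw [ha]
    have hft : ft t (mu k * (lam j)⁻¹) = (mu k - lam j) / a j k := by
      have hstep : t * (mu k * (lam j)⁻¹ - 1) + 1 = a j k * (lam j)⁻¹ := by
        rw [ha']
        field_simp [(hlam j).ne']
        ring
      rw [ft, hstep, div_eq_div_iff (by
        rw [ha']
        intro hzero
        exact h0' (by
          have := mul_eq_zero.mp hzero
          rcases this with h | h
          · exact h
          · exact absurd h (inv_ne_zero (hlam j).ne')) ) (hapos j k).ne']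
      field_simp [(hlam j).ne']
    have hcoef : 1 / t * (lam j - lam j / a j k * lam j)
        = lam j * ft t (mu k * (lam j)⁻¹) := by
      rw [hft]
      have hav : a j k * (a j k)⁻¹ = 1 := mul_inv_cancel₀ (hapos j k).ne'
      have htu : t * t⁻¹ = 1 := mul_inv_cancel₀ ht0.ne'
      linear_combination (t⁻¹ * lam j * (a j k)⁻¹) * ha' + (lam j * (a j k)⁻¹ * (mu k - lam j)) * htu - (t⁻¹ * lam j) * hav
    linear_combination (Matrix.trace (P j * Q k)).re * hcoef
  -- pointwise value of the objective
  have hFval : ∀ Z : Matrix (Fin n) (Fin n) ℂ,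
      (1 / t) * ((Matrix.trace ρ).re + (Matrix.trace (ρ * (Z + Zᴴ))).re +
          (1 - t) * (Matrix.trace (ρ * (Zᴴ * Z))).re +
          t * (Matrix.trace (σ * (Z * Zᴴ))).re)
      = (∑ j, ∑ k, lam j * ft t (mu k * (lam j)⁻¹) * (Matrix.trace (P j * Q k)).re)
        + (1 / t) * ((1 - t) * (Matrix.trace (ρ * ((Z - Z₀)ᴴ * (Z - Z₀)))).re
          + t * (Matrix.trace (σ * ((Z - Z₀) * (Z - Z₀)ᴴ))).re) := by
    intro Z
    rw [← hVc]
    linear_combination (1 / t) * hmain Z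
  have hlb : ∀ Z : Matrix (Fin n) (Fin n) ℂ,
      (∑ j, ∑ k, lam j * ft t (mu k * (lam j)⁻¹) * (Matrix.trace (P j * Q k)).re)
      ≤ (1 / t) * ((Matrix.trace ρ).re + (Matrix.trace (ρ * (Z + Zᴴ))).re +
          (1 - t) * (Matrix.trace (ρ * (Zᴴ * Z))).re +
          t * (Matrix.trace (σ * (Z * Zᴴ))).re) := by
    intro Z
    rw [hFval Z]
    have hX := quad1_nonneg hρ.posSemidef (Z - Z₀)
    have hY := quad2_nonneg hσ.posSemidef (Z - Z₀)
    have h0 : 0 ≤ (1 / t) * ((1 - t) * (Matrix.trace (ρ * ((Z - Z₀)ᴴ * (Z - Z₀)))).re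
        + t * (Matrix.trace (σ * ((Z - Z₀) * (Z - Z₀)ᴴ))).re) :=
      mul_nonneg (by positivity)
        (add_nonneg (mul_nonneg (by linarith) hX) (mul_nonneg ht0.le hY))
    linarith
  have heq : (1 / t) * ((Matrix.trace ρ).re + (Matrix.trace (ρ * (Z₀ + Z₀ᴴ))).re +
          (1 - t) * (Matrix.trace (ρ * (Z₀ᴴ * Z₀))).re +
          t * (Matrix.trace (σ * (Z₀ * Z₀ᴴ))).re)
      = ∑ j, ∑ k, lam j * ft t (mu k * (lam j)⁻¹) * (Matrix.trace (P j * Q k)).re := by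
    rw [hFval Z₀]
    simp
  have hinf : (⨅ Z : Matrix (Fin n) (Fin n) ℂ,
        (1 / t) * ((Matrix.trace ρ).re + (Matrix.trace (ρ * (Z + Zᴴ))).re +
          (1 - t) * (Matrix.trace (ρ * (Zᴴ * Z))).re +
          t * (Matrix.trace (σ * (Z * Zᴴ))).re))
      = ∑ j, ∑ k, lam j * ft t (mu k * (lam j)⁻¹) * (Matrix.trace (P j * Q k)).re := by
    refine le_antisymm ?_ (le_ciInf hlb)
    have hbdd : BddBelow (Set.range fun Z : Matrix (Fin n) (Fin n) ℂ =>
        (1 / t) * ((Matrix.trace ρ).re + (Matrix.trace (ρ * (Z + Zᴴ))).re +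
          (1 - t) * (Matrix.trace (ρ * (Zᴴ * Z))).re +
          t * (Matrix.trace (σ * (Z * Zᴴ))).re)) := by
      refine ⟨∑ j, ∑ k, lam j * ft t (mu k * (lam j)⁻¹) * (Matrix.trace (P j * Q k)).re, ?_⟩
      rintro x ⟨Z, rfl⟩
      exact hlb Z
    calc (⨅ Z : Matrix (Fin n) (Fin n) ℂ,
        (1 / t) * ((Matrix.trace ρ).re + (Matrix.trace (ρ * (Z + Zᴴ))).re +
          (1 - t) * (Matrix.trace (ρ * (Zᴴ * Z))).re +
          t * (Matrix.trace (σ * (Z * Zᴴ))).re))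
        ≤ (1 / t) * ((Matrix.trace ρ).re + (Matrix.trace (ρ * (Z₀ + Z₀ᴴ))).re +
          (1 - t) * (Matrix.trace (ρ * (Z₀ᴴ * Z₀))).re +
          t * (Matrix.trace (σ * (Z₀ * Z₀ᴴ))).re) := ciInf_le hbdd Z₀
      _ = _ := heq
  rw [hinf]
end

section
/- Let m ≥ 1, let t_1, …, t_m ∈ (0,1] and w_1, …, w_m > 0. Let d_A, n ≥ 1 and let ρ be a positive definite Hermitian density matrix on ℂ^{d_A} ⊗ ℂ^n (entries indexed by pairs (a,d) with a ∈ [d_A], d ∈ [n]), with ρ_D its partial trace over the first factor. Then (1/ln 2)·Σ_{i=1}^m w_i · D_{−f_{t_i}}(ρ ‖ I_{d_A} ⊗ ρ_D) = −inf_{Z} Re tr(ρ · P^{(m)}(Z)), where the infimum is over all families Z = {Z_i[a₁,a₂] : i ∈ [m], a₁,a₂ ∈ [d_A]} of n×n complex matrices, and P^{(m)}(Z) is the block matrix on ℂ^{d_A} ⊗ ℂ^n whose (a₁,a₂) block equals Σ_{i=1}^m (w_i/(t_i ln 2))·[ Z_i[a₁,a₂] + Z_i[a₂,a₁]* + (1−t_i)·Σ_{a₃}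 Z_i[a₃,a₁]*·Z_i[a₃,a₂] + δ_{a₁=a₂}·( I_n + t_i·Σ_{a₃,a₄} Z_i[a₃,a₄]·Z_i[a₃,a₄]* ) ]. -/
open scoped ComplexOrder Matrix Kronecker

/-- The standard `(-f_t)`-divergence `D_{-f_t}(ρ‖σ)` of two Hermitian matrices, defined via
spectral decompositions: `D_{-f_t}(ρ‖σ) = -∑_{j : λ_j > 0} ∑_{k : μ_k > 0}
λ_j f_t(μ_k λ_j⁻¹) tr(P_j Q_k)` where `tr(P_j Q_k) = ‖⟨v_j, w_k⟩‖²` for eigenvectors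
`v_j` of `ρ` and `w_k` of `σ`. (Junk value `0` if either matrix fails to be Hermitian.) -/
noncomputable def Dneg {N : Type*} [Fintype N] [DecidableEq N] (t : ℝ)
    (ρ σ : Matrix N N ℂ) : ℝ :=
  if h : ρ.IsHermitian ∧ σ.IsHermitian then
    -∑ j ∈ Finset.univ.filter (fun j => 0 < h.1.eigenvalues j),
      ∑ k ∈ Finset.univ.filter (fun k => 0 < h.2.eigenvalues k),
        h.1.eigenvalues j * ft t (h.2.eigenvalues k * (h.1.eigenvalues j)⁻¹) *
          ‖(inner ℂ (h.1.eigenvectorBasis j) (h.2.eigenvectorBasis k) : ℂ)‖ ^ 2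
  else 0

/-- The partial trace over the first tensor factor of a matrix on `ℂ^{d_A} ⊗ ℂ^n`. -/
noncomputable def ptrFst {dA n : ℕ} (ρ : Matrix (Fin dA × Fin n) (Fin dA × Fin n) ℂ) :
    Matrix (Fin n) (Fin n) ℂ :=
  Matrix.of fun d₁ d₂ => ∑ a : Fin dA, ρ (a, d₁) (a, d₂)

/-- The matrix-valued noncommutative polynomial `P^{(m)}(Z)` on `ℂ^{d_A} ⊗ ℂ^n`, whose
`(a₁,a₂)` block is `∑_i (w_i/(t_i ln 2))·[Z_i[a₁,a₂] + Z_i[a₂,a₁]* +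
(1-t_i)·∑_{a₃} Z_i[a₃,a₁]* Z_i[a₃,a₂] + δ_{a₁=a₂}(I + t_i ∑_{a₃,a₄} Z_i[a₃,a₄] Z_i[a₃,a₄]*)]`. -/
noncomputable def Pmat {m dA n : ℕ} (t w : Fin m → ℝ)
    (Z : Fin m → Fin dA → Fin dA → Matrix (Fin n) (Fin n) ℂ) :
    Matrix (Fin dA × Fin n) (Fin dA × Fin n) ℂ :=
  Matrix.of fun p q =>
    (∑ i, (w i / (t i * Real.log 2)) •
      (Z i p.1 q.1 + (Z i q.1 p.1)ᴴ +
        (1 - t i) • ∑ a₃, (Z i a₃ p.1)ᴴ * Z i a₃ q.1 +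
        if p.1 = q.1 then
          (1 : Matrix (Fin n) (Fin n) ℂ) + t i • ∑ a₃, ∑ a₄, Z i a₃ a₄ * (Z i a₃ a₄)ᴴ
        else 0)) p.2 q.2

open Matrix

lemma ciInf_eq_of_forall_le_of_exists_eq {ι : Sort*} [Nonempty ι] {f : ι → ℝ} {c : ℝ}
    (h1 : ∀ i, c ≤ f i) (h2 : ∃ i, f i = c) : (⨅ i, f i) = c := by
  obtain ⟨i, hi⟩ := h2
  refine le_antisymm ?_ (le_ciInf h1)
  calc (⨅ i, f i) ≤ f i := ciInf_le ⟨c, by rintro x ⟨j, rfl⟩; exact h1 j⟩ i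
  _ = c := hi

section scalar
variable {t lam mu : ℝ}

lemma key_sq (a : ℝ) (b y : ℂ) :
    a * (a * Complex.normSq y + 2 * (b * y).re) + Complex.normSq b
      = Complex.normSq ((a : ℂ) * y + (starRingEnd ℂ) b) := by
  simp only [Complex.normSq_apply, Complex.add_re, Complex.add_im, Complex.mul_re,
    Complex.mul_im, Complex.conj_re, Complex.conj_im, Complex.ofReal_re, Complex.ofReal_im]
  ring

lemma q_pos (ht0 : 0 < t) (ht1 : t ≤ 1) (hlam : 0 < lam) (hmu : 0 < mu) :
    0 < (1 - t) * lam + t * mu := by nlinarith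

lemma ft_eq (ht0 : 0 < t) (ht1 : t ≤ 1) (hlam : 0 < lam) (hmu : 0 < mu) :
    ft t (mu * lam⁻¹) = (mu - lam) / ((1 - t) * lam + t * mu) := by
  have hq := q_pos ht0 ht1 hlam hmu
  have hnum : mu * lam⁻¹ - 1 = (mu - lam) / lam := by field_simp
  have hden : t * (mu * lam⁻¹ - 1) + 1 = ((1 - t) * lam + t * mu) / lam := by
    field_simp; ring
  rw [ft, hden, hnum, div_div_div_comm, div_self hlam.ne', div_one]

lemma scalar_identity (ht0 : 0 < t) (ht1 : t ≤ 1) (hlam : 0 < lam) (hmu : 0 < mu)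
    (s y : ℂ) :
    ((1 - t) * lam + t * mu) * Complex.normSq y + 2 * (lam * (s * y).re)
        + lam * Complex.normSq s
      = Complex.normSq ((((1 - t) * lam + t * mu : ℝ)) * y + (starRingEnd ℂ) ((lam : ℂ) * s))
          / ((1 - t) * lam + t * mu)
        + t * (lam * ft t (mu * lam⁻¹) * Complex.normSq s) := by
  have hq := q_pos ht0 ht1 hlam hmu
  have h1 := key_sq ((1 - t) * lam + t * mu) ((lam : ℂ) * s) y
  have h3 : (((lam : ℂ) * s) * y).re = lam * (s * y).re := by
    rw [mul_assoc, Complex.re_ofReal_mul]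
  have h4 : Complex.normSq ((lam : ℂ) * s) = lam ^ 2 * Complex.normSq s := by
    rw [Complex.normSq_mul, Complex.normSq_ofReal]; ring
  rw [ft_eq ht0 ht1 hlam hmu, ← h1, h3, h4]
  field_simp
  ring

end scalar


lemma Dneg_eq {N : Type*} [Fintype N] [DecidableEq N] (t : ℝ) {ρ σ : Matrix N N ℂ}
    (hρ : ρ.PosDef) (hσ : σ.PosDef) :
    Dneg t ρ σ = -∑ j, ∑ k, hρ.1.eigenvalues j *
        ft t (hσ.1.eigenvalues k * (hρ.1.eigenvalues j)⁻¹) *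
        Complex.normSq (((hρ.1.eigenvectorUnitary : Matrix N N ℂ)ᴴ *
          (hσ.1.eigenvectorUnitary : Matrix N N ℂ)) j k) := by
  rw [Dneg, dif_pos ⟨hρ.1, hσ.1⟩]
  rw [Finset.filter_true_of_mem (fun j _ => hρ.eigenvalues_pos j),
      Finset.filter_true_of_mem (fun k _ => hσ.eigenvalues_pos k)]
  congr 1
  refine Finset.sum_congr rfl fun j _ => Finset.sum_congr rfl fun k _ => ?_
  congr 1
  have h : (inner ℂ (hρ.1.eigenvectorBasis j) (hσ.1.eigenvectorBasis k) : ℂ)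
      = ((hρ.1.eigenvectorUnitary : Matrix N N ℂ)ᴴ *
          (hσ.1.eigenvectorUnitary : Matrix N N ℂ)) j k := by
    simp [Matrix.mul_apply, Matrix.conjTranspose_apply,
      Matrix.IsHermitian.eigenvectorUnitary_apply, PiLp.inner_apply, RCLike.inner_apply,
      RCLike.star_def, mul_comm]
  rw [h, Complex.sq_norm]


noncomputable def gfun {N : Type*} [Fintype N] (t : ℝ) (ρ σ W : Matrix N N ℂ) : ℝ :=
  2 * (Matrix.trace (ρ * W)).re + (1 - t) * (Matrix.trace (W * ρ * Wᴴ)).re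
    + t * (Matrix.trace (Wᴴ * σ * W)).re + (Matrix.trace ρ).re

lemma gfun_unitary {N : Type*} [Fintype N] [DecidableEq N] (t : ℝ) (lam mu : N → ℝ)
    (U V Y : Matrix N N ℂ) (hU1 : Uᴴ * U = 1) (hU2 : U * Uᴴ = 1)
    (hV1 : Vᴴ * V = 1) (hV2 : V * Vᴴ = 1) :
    gfun t (U * diagonal (fun j => (lam j : ℂ)) * Uᴴ) (V * diagonal (fun k => (mu k : ℂ)) * Vᴴ)
        (V * Y * Uᴴ)
      = ∑ j, ∑ k, (((1 - t) * lam j + t * mu k) * Complex.normSq (Y k j)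
          + 2 * (lam j * ((Uᴴ * V) j k * Y k j).re)
          + lam j * Complex.normSq ((Uᴴ * V) j k)) := by
  have hUc : ∀ X : Matrix N N ℂ, Uᴴ * (U * X) = X := fun X => by
    rw [← Matrix.mul_assoc, hU1, Matrix.one_mul]
  have hUc2 : ∀ X : Matrix N N ℂ, U * (Uᴴ * X) = X := fun X => by
    rw [← Matrix.mul_assoc, hU2, Matrix.one_mul]
  have hVc : ∀ X : Matrix N N ℂ, Vᴴ * (V * X) = X := fun X => by
    rw [← Matrix.mul_assoc, hV1, Matrix.one_mul]
  have hVc2 : ∀ X : Matrix N N ℂ, V * (Vᴴ * X) = X := fun X => by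
    rw [← Matrix.mul_assoc, hV2, Matrix.one_mul]
  have tconjU : ∀ X : Matrix N N ℂ, (U * X * Uᴴ).trace = X.trace := fun X => by
    rw [Matrix.trace_mul_comm, ← Matrix.mul_assoc, hU1, Matrix.one_mul]
  have tconjV : ∀ X : Matrix N N ℂ, (V * X * Vᴴ).trace = X.trace := fun X => by
    rw [Matrix.trace_mul_comm, ← Matrix.mul_assoc, hV1, Matrix.one_mul]
  set S : Matrix N N ℂ := Uᴴ * V with hS
  set dm : N → ℂ := fun j => (lam j : ℂ) with hdm
  set du : N → ℂ := fun k => (mu k : ℂ) with hdu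
  have hWt : (V * Y * Uᴴ)ᴴ = U * Yᴴ * Vᴴ := by
    simp [Matrix.conjTranspose_mul, Matrix.mul_assoc]
  -- row norms of S
  have hSS : S * Sᴴ = 1 := by
    rw [hS, Matrix.conjTranspose_mul, Matrix.conjTranspose_conjTranspose]
    calc Uᴴ * V * (Vᴴ * U) = Uᴴ * (V * (Vᴴ * U)) := by rw [Matrix.mul_assoc]
    _ = Uᴴ * U := by rw [hVc2]
    _ = 1 := hU1
  have hrow : ∀ j, ∑ k, Complex.normSq (S j k) = 1 := by
    intro j
    have h := congrArg (fun M : Matrix N N ℂ => M j j) hSS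
    simp only [Matrix.mul_apply, Matrix.conjTranspose_apply, Matrix.one_apply_eq] at h
    have h2 : ((∑ k, Complex.normSq (S j k) : ℝ) : ℂ) = 1 := by
      push_cast
      rw [← h]
      exact Finset.sum_congr rfl fun k _ => by
        rw [← Complex.mul_conj]; rfl
    exact_mod_cast h2
  have tdiag : ∀ (d : N → ℂ) (X : Matrix N N ℂ),
      (diagonal d * X).trace = ∑ j, d j * X j j := by
    intro d X; simp [Matrix.trace, Matrix.diag, Matrix.diagonal_mul]
  have e1 : (U * diagonal dm * Uᴴ) * (V * Y * Uᴴ) = U * (diagonal dm * (S * Y)) * Uᴴ := by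
    simp only [hS, Matrix.mul_assoc, hUc, hVc]
  have e2 : (V * Y * Uᴴ) * (U * diagonal dm * Uᴴ) * (V * Y * Uᴴ)ᴴ
      = V * (Y * diagonal dm * Yᴴ) * Vᴴ := by
    rw [hWt]; simp only [Matrix.mul_assoc, hUc, hVc]
  have e3 : (V * Y * Uᴴ)ᴴ * (V * diagonal du * Vᴴ) * (V * Y * Uᴴ)
      = U * (Yᴴ * diagonal du * Y) * Uᴴ := by
    rw [hWt]; simp only [Matrix.mul_assoc, hUc, hVc]
  have r1 : ((U * diagonal dm * Uᴴ) * (V * Y * Uᴴ)).trace.re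
      = ∑ j, ∑ k, lam j * (S j k * Y k j).re := by
    rw [e1, tconjU, tdiag]
    simp only [Matrix.mul_apply, Finset.mul_sum]
    rw [Complex.re_sum]
    refine Finset.sum_congr rfl fun j _ => ?_
    rw [Complex.re_sum]
    exact Finset.sum_congr rfl fun k _ => Complex.re_ofReal_mul _ _
  have r2 : ((V * Y * Uᴴ) * (U * diagonal dm * Uᴴ) * (V * Y * Uᴴ)ᴴ).trace.re
      = ∑ j, ∑ k, lam j * Complex.normSq (Y k j) := by
    rw [e2, tconjV]
    have h1 : (Y * diagonal dm * Yᴴ).trace = (diagonal dm * (Yᴴ * Y)).trace := by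
      rw [Matrix.trace_mul_comm (Y * diagonal dm) Yᴴ, ← Matrix.mul_assoc,
        Matrix.trace_mul_comm (Yᴴ * Y) (diagonal dm)]
    have h2 : (diagonal dm * (Yᴴ * Y)).trace
        = ((∑ j, ∑ k, lam j * Complex.normSq (Y k j) : ℝ) : ℂ) := by
      rw [tdiag]
      push_cast
      simp only [Matrix.mul_apply, Matrix.conjTranspose_apply, Finset.mul_sum]
      refine Finset.sum_congr rfl fun j _ => Finset.sum_congr rfl fun k _ => ?_
      rw [← Complex.mul_conj]
      simp only [hdm, RCLike.star_def]
      ring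
    rw [h1, h2, Complex.ofReal_re]
  have r3 : ((V * Y * Uᴴ)ᴴ * (V * diagonal du * Vᴴ) * (V * Y * Uᴴ)).trace.re
      = ∑ j, ∑ k, mu k * Complex.normSq (Y k j) := by
    rw [e3, tconjU]
    have h1 : (Yᴴ * diagonal du * Y).trace = (diagonal du * (Y * Yᴴ)).trace := by
      rw [Matrix.trace_mul_comm (Yᴴ * diagonal du) Y, ← Matrix.mul_assoc,
        Matrix.trace_mul_comm (Y * Yᴴ) (diagonal du)]
    have h2 : (diagonal du * (Y * Yᴴ)).trace
        = ((∑ j, ∑ k, mu j * Complex.normSq (Y j k) : ℝ) : ℂ) := by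
      rw [tdiag]
      push_cast
      simp only [Matrix.mul_apply, Matrix.conjTranspose_apply, Finset.mul_sum]
      refine Finset.sum_congr rfl fun j _ => Finset.sum_congr rfl fun k _ => ?_
      rw [← Complex.mul_conj]
      simp only [hdu, RCLike.star_def]
      try ring
    rw [h1, h2, Complex.ofReal_re, Finset.sum_comm]
  have r4 : (U * diagonal dm * Uᴴ).trace.re
      = ∑ j, ∑ k, lam j * Complex.normSq (S j k) := by
    rw [tconjU, Matrix.trace_diagonal, Complex.re_sum]
    refine Finset.sum_congr rfl fun j _ => ?_
    rw [hdm]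
    rw [Complex.ofReal_re]
    conv_lhs => rw [← mul_one (lam j), ← hrow j]
    rw [Finset.mul_sum]
  rw [gfun, r1, r2, r3, r4]
  simp only [Finset.mul_sum]
  rw [← Finset.sum_add_distrib, ← Finset.sum_add_distrib, ← Finset.sum_add_distrib]
  refine Finset.sum_congr rfl fun j _ => ?_
  rw [← Finset.sum_add_distrib, ← Finset.sum_add_distrib, ← Finset.sum_add_distrib]
  exact Finset.sum_congr rfl fun k _ => by ring


lemma core {N : Type*} [Fintype N] [DecidableEq N] {t : ℝ} (ht0 : 0 < t) (ht1 : t ≤ 1)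
    {ρ σ : Matrix N N ℂ} (hρ : ρ.PosDef) (hσ : σ.PosDef) :
    (∀ W : Matrix N N ℂ, -(t * Dneg t ρ σ) ≤ gfun t ρ σ W) ∧
      ∃ W : Matrix N N ℂ, gfun t ρ σ W = -(t * Dneg t ρ σ) := by
  obtain ⟨U, hUdef⟩ : ∃ U' : Matrix N N ℂ, U' = (hρ.1.eigenvectorUnitary : Matrix N N ℂ) :=
    ⟨_, rfl⟩
  obtain ⟨V, hVdef⟩ : ∃ V' : Matrix N N ℂ, V' = (hσ.1.eigenvectorUnitary : Matrix N N ℂ) :=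
    ⟨_, rfl⟩
  obtain ⟨lam, hlam⟩ : ∃ l : N → ℝ, l = hρ.1.eigenvalues := ⟨_, rfl⟩
  obtain ⟨mu, hmu⟩ : ∃ l : N → ℝ, l = hσ.1.eigenvalues := ⟨_, rfl⟩
  have hlampos : ∀ j, 0 < lam j := fun j => hlam ▸ hρ.eigenvalues_pos j
  have hmupos : ∀ k, 0 < mu k := fun k => hmu ▸ hσ.eigenvalues_pos k
  have hU1 : Uᴴ * U = 1 := by
    rw [hUdef, ← Matrix.star_eq_conjTranspose]
    exact Matrix.mem_unitaryGroup_iff'.mp (hρ.1.eigenvectorUnitary).2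
  have hU2 : U * Uᴴ = 1 := by
    rw [hUdef, ← Matrix.star_eq_conjTranspose]
    exact Matrix.mem_unitaryGroup_iff.mp (hρ.1.eigenvectorUnitary).2
  have hV1 : Vᴴ * V = 1 := by
    rw [hVdef, ← Matrix.star_eq_conjTranspose]
    exact Matrix.mem_unitaryGroup_iff'.mp (hσ.1.eigenvectorUnitary).2
  have hV2 : V * Vᴴ = 1 := by
    rw [hVdef, ← Matrix.star_eq_conjTranspose]
    exact Matrix.mem_unitaryGroup_iff.mp (hσ.1.eigenvectorUnitary).2
  have hρspec : ρ = U * diagonal (fun j => (lam j : ℂ)) * Uᴴ := by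
    rw [hUdef, hlam, ← Matrix.star_eq_conjTranspose]
    exact hρ.1.spectral_theorem
  have hσspec : σ = V * diagonal (fun k => (mu k : ℂ)) * Vᴴ := by
    rw [hVdef, hmu, ← Matrix.star_eq_conjTranspose]
    exact hσ.1.spectral_theorem
  have hVc2 : ∀ X : Matrix N N ℂ, V * (Vᴴ * X) = X := fun X => by
    rw [← Matrix.mul_assoc, hV2, Matrix.one_mul]
  have hmin : -(t * Dneg t ρ σ) = ∑ j, ∑ k,
      t * (lam j * ft t (mu k * (lam j)⁻¹) * Complex.normSq ((Uᴴ * V) j k)) := by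
    rw [Dneg_eq t hρ hσ, ← hUdef, ← hVdef, ← hlam, ← hmu]
    rw [mul_neg, neg_neg, Finset.mul_sum]
    exact Finset.sum_congr rfl fun j _ => Finset.mul_sum _ _ _
  have key : ∀ Y : Matrix N N ℂ, gfun t ρ σ (V * Y * Uᴴ)
      = ∑ j, ∑ k, (((1 - t) * lam j + t * mu k) * Complex.normSq (Y k j)
          + 2 * (lam j * ((Uᴴ * V) j k * Y k j).re)
          + lam j * Complex.normSq ((Uᴴ * V) j k)) := by
    intro Y
    rw [hρspec, hσspec]
    exact gfun_unitary t lam mu U V Y hU1 hU2 hV1 hV2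
  have pair : ∀ (j k : N) (y : ℂ),
      t * (lam j * ft t (mu k * (lam j)⁻¹) * Complex.normSq ((Uᴴ * V) j k))
        ≤ ((1 - t) * lam j + t * mu k) * Complex.normSq y
          + 2 * (lam j * ((Uᴴ * V) j k * y).re)
          + lam j * Complex.normSq ((Uᴴ * V) j k) := by
    intro j k y
    rw [scalar_identity ht0 ht1 (hlampos j) (hmupos k) ((Uᴴ * V) j k) y]
    exact le_add_of_nonneg_left (div_nonneg (Complex.normSq_nonneg _)
      (q_pos ht0 ht1 (hlampos j) (hmupos k)).le)
  constructor
  · intro W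
    have hWdecomp : V * (Vᴴ * W * U) * Uᴴ = W := by
      simp only [Matrix.mul_assoc]
      rw [hU2, Matrix.mul_one, hVc2]
    rw [hmin, ← hWdecomp, key (Vᴴ * W * U)]
    exact Finset.sum_le_sum fun j _ => Finset.sum_le_sum fun k _ => pair j k _
  · refine ⟨V * (Matrix.of fun k j =>
        -(starRingEnd ℂ) ((lam j : ℂ) * (Uᴴ * V) j k)
          / ((((1 - t) * lam j + t * mu k : ℝ)) : ℂ)) * Uᴴ, ?_⟩
    rw [key _, hmin]
    refine Finset.sum_congr rfl fun j _ => Finset.sum_congr rfl fun k _ => ?_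
    rw [scalar_identity ht0 ht1 (hlampos j) (hmupos k) ((Uᴴ * V) j k) _]
    have hq := q_pos ht0 ht1 (hlampos j) (hmupos k)
    have hz : ((((1 - t) * lam j + t * mu k : ℝ)) : ℂ) *
        ((Matrix.of fun k j => -(starRingEnd ℂ) ((lam j : ℂ) * (Uᴴ * V) j k)
          / ((((1 - t) * lam j + t * mu k : ℝ)) : ℂ)) k j)
        + (starRingEnd ℂ) ((lam j : ℂ) * (Uᴴ * V) j k) = 0 := by
      simp only [Matrix.of_apply]
      have : ((((1 - t) * lam j + t * mu k : ℝ)) : ℂ) ≠ 0 := by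
        exact_mod_cast hq.ne'
      rw [mul_comm, div_mul_cancel₀ _ this, neg_add_cancel]
    simp only [Matrix.of_apply] at hz ⊢
    rw [hz, Complex.normSq_zero, zero_div, zero_add]

lemma ptr_trace {dA n : ℕ} (A : Matrix (Fin dA × Fin n) (Fin dA × Fin n) ℂ)
    (X : Matrix (Fin n) (Fin n) ℂ) :
    Matrix.trace (A * ((1 : Matrix (Fin dA) (Fin dA) ℂ) ⊗ₖ X))
      = Matrix.trace (ptrFst A * X) := by
  simp only [Matrix.trace, Matrix.diag, Matrix.mul_apply, Matrix.kroneckerMap_apply,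
    Matrix.one_apply, ptrFst, Matrix.of_apply, Fintype.sum_prod_type, ite_mul, one_mul,
    zero_mul, mul_ite, mul_one, mul_zero, Finset.sum_mul]
  simp only [Finset.sum_ite_irrel, Finset.sum_const_zero, Finset.sum_ite_eq',
    Finset.mem_univ, if_true]
  rw [Finset.sum_comm]
  exact Finset.sum_congr rfl fun d1 _ => Finset.sum_comm

noncomputable def bm {dA n : ℕ} (ZZ : Fin dA → Fin dA → Matrix (Fin n) (Fin n) ℂ) :
    Matrix (Fin dA × Fin n) (Fin dA × Fin n) ℂ :=
  Matrix.of fun p q => ZZ p.1 q.1 p.2 q.2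

lemma Pmat_eq {m dA n : ℕ} (t w : Fin m → ℝ)
    (Z : Fin m → Fin dA → Fin dA → Matrix (Fin n) (Fin n) ℂ) :
    Pmat t w Z = ∑ i, (w i / (t i * Real.log 2)) •
      (bm (Z i) + (bm (Z i))ᴴ + (1 - t i) • ((bm (Z i))ᴴ * bm (Z i))
        + (1 : Matrix (Fin dA × Fin n) (Fin dA × Fin n) ℂ)
        + t i • ((1 : Matrix (Fin dA) (Fin dA) ℂ) ⊗ₖ ptrFst (bm (Z i) * (bm (Z i))ᴴ))) := by
  ext p q
  simp only [Pmat, Matrix.of_apply, Matrix.sum_apply, Matrix.smul_apply]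
  refine Finset.sum_congr rfl fun i _ => ?_
  congr 1
  simp only [Matrix.add_apply, Matrix.smul_apply, Matrix.sum_apply, Matrix.mul_apply,
    Matrix.conjTranspose_apply, Matrix.kroneckerMap_apply, Matrix.one_apply, bm, ptrFst,
    Matrix.of_apply, Fintype.sum_prod_type]
  by_cases h : p.1 = q.1
  · simp [h, Matrix.add_apply, Matrix.smul_apply, Matrix.one_apply, Matrix.sum_apply,
      Matrix.mul_apply, Matrix.conjTranspose_apply, Prod.ext_iff, smul_eq_mul]
    ring
  · simp [h, Prod.ext_iff]


lemma ptrFst_isHermitian {dA n : ℕ} {ρ : Matrix (Fin dA × Fin n) (Fin dA × Fin n) ℂ}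
    (hρ : ρ.IsHermitian) : (ptrFst ρ).IsHermitian := by
  ext d1 d2
  simp only [Matrix.conjTranspose_apply, ptrFst, Matrix.of_apply, star_sum]
  exact Finset.sum_congr rfl fun a _ => hρ.apply (a, d1) (a, d2)

lemma ptrFst_posDef {dA n : ℕ} (hdA : 1 ≤ dA) {ρ : Matrix (Fin dA × Fin n) (Fin dA × Fin n) ℂ}
    (hρ : ρ.PosDef) : (ptrFst ρ).PosDef := by
  refine Matrix.PosDef.of_dotProduct_mulVec_pos (ptrFst_isHermitian hρ.1) fun y hy => ?_
  have lhs : dotProduct (star y) (ptrFst ρ *ᵥ y)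
      = ∑ d1, ∑ d2, ∑ a, star (y d1) * ρ (a, d1) (a, d2) * y d2 := by
    simp only [dotProduct, Matrix.mulVec, dotProduct, ptrFst, Matrix.of_apply,
      Pi.star_apply, Finset.sum_mul, Finset.mul_sum]
    exact Finset.sum_congr rfl fun d1 _ => Finset.sum_congr rfl fun d2 _ =>
      Finset.sum_congr rfl fun a _ => by ring
  have rhs : ∀ a : Fin dA,
      dotProduct (star (fun p : Fin dA × Fin n => if p.1 = a then y p.2 else 0))
        (ρ *ᵥ (fun p : Fin dA × Fin n => if p.1 = a then y p.2 else 0))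
      = ∑ d1, ∑ d2, star (y d1) * ρ (a, d1) (a, d2) * y d2 := by
    intro a
    simp only [dotProduct, Matrix.mulVec, dotProduct, Pi.star_apply,
      Fintype.sum_prod_type, apply_ite (star : ℂ → ℂ), star_zero, ite_mul, zero_mul,
      mul_ite, mul_zero, Finset.sum_ite_irrel, Finset.sum_const_zero, Finset.sum_ite_eq,
      Finset.sum_ite_eq', Finset.mem_univ, if_true, Finset.mul_sum]
    exact Finset.sum_congr rfl fun d1 _ => Finset.sum_congr rfl fun d2 _ => by ring
  have key : dotProduct (star y) (ptrFst ρ *ᵥ y)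
      = ∑ a : Fin dA, dotProduct
          (star (fun p : Fin dA × Fin n => if p.1 = a then y p.2 else 0))
          (ρ *ᵥ (fun p : Fin dA × Fin n => if p.1 = a then y p.2 else 0)) := by
    rw [lhs]
    rw [show (∑ a : Fin dA, dotProduct
          (star (fun p : Fin dA × Fin n => if p.1 = a then y p.2 else 0))
          (ρ *ᵥ (fun p : Fin dA × Fin n => if p.1 = a then y p.2 else 0)))
        = ∑ a, ∑ d1, ∑ d2, star (y d1) * ρ (a, d1) (a, d2) * y d2 from
      Finset.sum_congr rfl fun a _ => rhs a]
    refine Eq.trans (Finset.sum_congr rfl fun d1 _ => Finset.sum_comm) Finset.sum_comm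
  rw [key]
  have hne : Nonempty (Fin dA) := ⟨⟨0, hdA⟩⟩
  refine Finset.sum_pos (fun a _ => hρ.dotProduct_mulVec_pos ?_) Finset.univ_nonempty
  obtain ⟨d, hd⟩ := Function.ne_iff.mp hy
  exact Function.ne_iff.mpr ⟨(a, d), by simpa using hd⟩

lemma one_kron_posDef {dA n : ℕ} {X : Matrix (Fin n) (Fin n) ℂ} (hX : X.PosDef) :
    ((1 : Matrix (Fin dA) (Fin dA) ℂ) ⊗ₖ X).PosDef := by
  refine Matrix.PosDef.of_dotProduct_mulVec_pos ?_ ?_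
  · ext p q
    simp only [Matrix.conjTranspose_apply, Matrix.kroneckerMap_apply, Matrix.one_apply,
      star_mul', apply_ite (star : ℂ → ℂ), star_zero, star_one]
    by_cases h : p.1 = q.1
    · rw [if_pos h.symm, if_pos h, hX.1.apply p.2 q.2]; try ring
    · rw [if_neg (fun hh => h hh.symm), if_neg h]; try ring
  · intro x hx
    have lhs : dotProduct (star x) (((1 : Matrix (Fin dA) (Fin dA) ℂ) ⊗ₖ X) *ᵥ x)
        = ∑ a, ∑ d1, ∑ d2, star (x (a, d1)) * X d1 d2 * x (a, d2) := by
      simp only [dotProduct, Matrix.mulVec, dotProduct, Pi.star_apply,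
        Matrix.kroneckerMap_apply, Matrix.one_apply, Fintype.sum_prod_type, ite_mul, one_mul,
        zero_mul, mul_ite, mul_zero, Finset.sum_ite_irrel, Finset.sum_const_zero,
        Finset.sum_ite_eq, Finset.sum_ite_eq', Finset.mem_univ, if_true, Finset.mul_sum]
      exact Finset.sum_congr rfl fun a _ => Finset.sum_congr rfl fun d1 _ =>
        Finset.sum_congr rfl fun d2 _ => by ring
    have rhs : ∀ a : Fin dA,
        dotProduct (star (fun d => x (a, d))) (X *ᵥ (fun d => x (a, d)))
        = ∑ d1, ∑ d2, star (x (a, d1)) * X d1 d2 * x (a, d2) := by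
      intro a
      simp only [dotProduct, Matrix.mulVec, dotProduct, Pi.star_apply,
        Finset.mul_sum]
      exact Finset.sum_congr rfl fun d1 _ => Finset.sum_congr rfl fun d2 _ => by ring
    have key : dotProduct (star x) (((1 : Matrix (Fin dA) (Fin dA) ℂ) ⊗ₖ X) *ᵥ x)
        = ∑ a : Fin dA, dotProduct (star (fun d => x (a, d))) (X *ᵥ (fun d => x (a, d))) := by
      rw [lhs]
      exact (Finset.sum_congr rfl fun a _ => (rhs a)).symm ▸ rfl
    rw [lhs, show (∑ a : Fin dA, ∑ d1, ∑ d2, star (x (a, d1)) * X d1 d2 * x (a, d2))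
        = ∑ a : Fin dA, dotProduct (star (fun d => x (a, d))) (X *ᵥ (fun d => x (a, d)))
      from Finset.sum_congr rfl fun a _ => (rhs a).symm]
    obtain ⟨⟨a0, d0⟩, hp⟩ := Function.ne_iff.mp hx
    refine Finset.sum_pos' (fun a _ => hX.posSemidef.dotProduct_mulVec_nonneg _) ⟨a0, Finset.mem_univ _, ?_⟩
    exact hX.dotProduct_mulVec_pos (Function.ne_iff.mpr ⟨d0, by simpa using hp⟩)

lemma trace_F_re {dA n : ℕ} (t' : ℝ) {ρ : Matrix (Fin dA × Fin n) (Fin dA × Fin n) ℂ}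
    (hρh : ρ.IsHermitian) (W : Matrix (Fin dA × Fin n) (Fin dA × Fin n) ℂ) :
    (Matrix.trace (ρ * (W + Wᴴ + (1 - t') • (Wᴴ * W)
        + (1 : Matrix (Fin dA × Fin n) (Fin dA × Fin n) ℂ)
        + t' • ((1 : Matrix (Fin dA) (Fin dA) ℂ) ⊗ₖ ptrFst (W * Wᴴ))))).re
      = gfun t' ρ ((1 : Matrix (Fin dA) (Fin dA) ℂ) ⊗ₖ ptrFst ρ) W := by
  have h2 : Matrix.trace (ρ * Wᴴ) = star (Matrix.trace (ρ * W)) := by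
    rw [show ρ * Wᴴ = (W * ρ)ᴴ by rw [Matrix.conjTranspose_mul, hρh.eq],
      Matrix.trace_conjTranspose, Matrix.trace_mul_comm]
  have h3 : Matrix.trace (ρ * (Wᴴ * W)) = Matrix.trace (W * ρ * Wᴴ) := by
    rw [← Matrix.mul_assoc, Matrix.trace_mul_comm (ρ * Wᴴ) W, ← Matrix.mul_assoc]
  have h5 : Matrix.trace (ρ * ((1 : Matrix (Fin dA) (Fin dA) ℂ) ⊗ₖ ptrFst (W * Wᴴ)))
      = Matrix.trace (Wᴴ * ((1 : Matrix (Fin dA) (Fin dA) ℂ) ⊗ₖ ptrFst ρ) * W) := by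
    rw [ptr_trace, Matrix.trace_mul_comm, ← ptr_trace,
      Matrix.mul_assoc W Wᴴ _, Matrix.trace_mul_comm W _]
  simp only [Matrix.mul_add, Matrix.trace_add, Complex.add_re, Matrix.mul_one,
    Matrix.mul_smul, Matrix.trace_smul, h2, h3, h5, Complex.smul_re, smul_eq_mul]
  rw [gfun]
  have : (star (Matrix.trace (ρ * W))).re = (Matrix.trace (ρ * W)).re := by
    rw [RCLike.star_def, Complex.conj_re]
  rw [this]; ring

/-- Variational expression for the weighted sum of `(-f_{t_i})`-divergences of a positive
definite density matrix `ρ` on `ℂ^{d_A} ⊗ ℂ^n` relative to `I_A ⊗ ρ_D`: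
`(1/ln 2)·∑_i w_i D_{-f_{t_i}}(ρ‖I_A ⊗ ρ_D) = -inf_Z Re tr(ρ·P^{(m)}(Z))`, infimum over all
families `Z = {Z_i[a₁,a₂]}` of `n × n` complex matrices. -/
theorem weighted_divergence_ncpoly (m : ℕ) (hm : 1 ≤ m) (t w : Fin m → ℝ)
    (ht : ∀ i, t i ∈ Set.Ioc (0 : ℝ) 1) (hw : ∀ i, 0 < w i)
    (dA n : ℕ) (hdA : 1 ≤ dA) (hn : 1 ≤ n)
    (ρ : Matrix (Fin dA × Fin n) (Fin dA × Fin n) ℂ)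
    (hρ : ρ.PosDef) (hρtr : ρ.trace = 1) :
    (1 / Real.log 2) *
        ∑ i, w i * Dneg (t i) ρ ((1 : Matrix (Fin dA) (Fin dA) ℂ) ⊗ₖ ptrFst ρ) =
      -⨅ Z : Fin m → Fin dA → Fin dA → Matrix (Fin n) (Fin n) ℂ,
        (Matrix.trace (ρ * Pmat t w Z)).re := by
  have hσ : ((1 : Matrix (Fin dA) (Fin dA) ℂ) ⊗ₖ ptrFst ρ).PosDef :=
    one_kron_posDef (ptrFst_posDef hdA hρ)
  have hlog : 0 < Real.log 2 := Real.log_pos one_lt_two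
  have hc : ∀ i, 0 < w i / (t i * Real.log 2) := fun i =>
    div_pos (hw i) (mul_pos (ht i).1 hlog)
  have hcore := fun i => core (ht i).1 (ht i).2 hρ hσ
  have tdecomp : ∀ Zf : Fin m → Fin dA → Fin dA → Matrix (Fin n) (Fin n) ℂ,
      (Matrix.trace (ρ * Pmat t w Zf)).re
        = ∑ i, (w i / (t i * Real.log 2)) *
            gfun (t i) ρ ((1 : Matrix (Fin dA) (Fin dA) ℂ) ⊗ₖ ptrFst ρ) (bm (Zf i)) := by
    intro Zf
    rw [Pmat_eq, Matrix.mul_sum, Matrix.trace_sum, Complex.re_sum]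
    refine Finset.sum_congr rfl fun i _ => ?_
    rw [Matrix.mul_smul, Matrix.trace_smul, Complex.smul_re, smul_eq_mul,
      trace_F_re (t i) hρ.1 (bm (Zf i))]
  have hinf : (⨅ Zf : Fin m → Fin dA → Fin dA → Matrix (Fin n) (Fin n) ℂ,
      (Matrix.trace (ρ * Pmat t w Zf)).re)
      = ∑ i, (w i / (t i * Real.log 2)) *
          (-(t i * Dneg (t i) ρ ((1 : Matrix (Fin dA) (Fin dA) ℂ) ⊗ₖ ptrFst ρ))) := by
    apply ciInf_eq_of_forall_le_of_exists_eq
    · intro Zf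
      rw [tdecomp Zf]
      exact Finset.sum_le_sum fun i _ =>
        mul_le_mul_of_nonneg_left ((hcore i).1 _) (hc i).le
    · choose Wf hWf using fun i => (hcore i).2
      refine ⟨fun i a1 a2 => Matrix.of fun d1 d2 => Wf i (a1, d1) (a2, d2), ?_⟩
      rw [tdecomp]
      refine Finset.sum_congr rfl fun i _ => ?_
      congr 1
      rw [show bm (fun a1 a2 => Matrix.of fun d1 d2 => Wf i (a1, d1) (a2, d2)) = Wf i from
        by ext ⟨a, d⟩ ⟨b, e⟩; rfl]
      exact hWf i
  rw [hinf, Finset.mul_sum]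
  simp only [mul_neg, Finset.sum_neg_distrib, neg_neg]
  refine Finset.sum_congr rfl fun i _ => ?_
  have hti : t i ≠ 0 := (ht i).1.ne'
  field_simp
end
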